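/- arXiv:0804.3690 — 5 statements merged into one kernel-verified Lean document; each statement's English description precedes it below -/
import Mathlib

section
/- Let H be a graph admitting a drawing D with at most s distinct edge-slopes and at most ℓ distinct edge-lengths, where s, ℓ ≥ 1. Let G be a graph admitting an H-partition of width w ≥ 1. Then the distance-number of G satisfies dn(G) ≤ s·ℓ·w·(w−1) + ⌊w/2⌋ + ℓ. -/
noncomputable section

/-- The Euclidean plane. -/
abbrev Plane : Type := EuclideanSpace ℝ (Fin 2)

/-- The set of edge-lengths determined by a map `f` of the vertices of `G` to the plane. -/
def SimpleGraph.edgeLengths {V : Type*} (G : SimpleGraph V) (f : V → Plane) : Set ℝ :=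
  {d : ℝ | ∃ u v : V, G.Adj u v ∧ Dist.dist (f u) (f v) = d}

/-- A degenerate drawing of `G`: an injective map from the vertices to the plane. -/
def SimpleGraph.IsDegenDrawing {V : Type*} (_G : SimpleGraph V) (f : V → Plane) : Prop :=
  Function.Injective f

/-- A drawing of `G`: a degenerate drawing such that no vertex lies on the open segment
representing an edge. -/
def SimpleGraph.IsDrawing {V : Type*} (G : SimpleGraph V) (f : V → Plane) : Prop :=
  Function.Injective f ∧ ∀ u v w : V, G.Adj u v → f w ∉ openSegment ℝ (f u) (f v)

/-- The degenerate distance-number of `G`: the minimum number of distinct edge-lengths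
in a degenerate drawing of `G`. -/
def SimpleGraph.ddn {V : Type*} (G : SimpleGraph V) : ℕ :=
  sInf {k : ℕ | ∃ f : V → Plane, G.IsDegenDrawing f ∧ (G.edgeLengths f).ncard = k}

/-- The distance-number of `G`: the minimum number of distinct edge-lengths
in a drawing of `G`. -/
def SimpleGraph.dn {V : Type*} (G : SimpleGraph V) : ℕ :=
  sInf {k : ℕ | ∃ f : V → Plane, G.IsDrawing f ∧ (G.edgeLengths f).ncard = k}

/-- The set of edge-slopes of a drawing `f` of `G`: the directions (lines through the
origin) spanned by the difference vectors of adjacent vertices. -/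
def SimpleGraph.edgeSlopes {V : Type*} (G : SimpleGraph V) (f : V → Plane) :
    Set (Submodule ℝ Plane) :=
  {L | ∃ u v : V, G.Adj u v ∧ L = Submodule.span ℝ {f v - f u}}

section Helpers
open Complex Real

/-- planar determinant of two complex numbers -/
def cdet (x y : ℂ) : ℝ := x.re * y.im - x.im * y.re

lemma cdet_self (x : ℂ) : cdet x x = 0 := by simp [cdet]; ring
lemma cdet_comm (x y : ℂ) : cdet x y = - cdet y x := by simp [cdet]; ring
lemma cdet_smul_right (x y : ℂ) (r : ℝ) : cdet x (r • y) = r * cdet x y := by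
  simp [cdet, Complex.real_smul, Complex.mul_re, Complex.mul_im]; ring
lemma cdet_smul_left (x y : ℂ) (r : ℝ) : cdet (r • x) y = r * cdet x y := by
  simp [cdet, Complex.real_smul, Complex.mul_re, Complex.mul_im]; ring
lemma cdet_add_right (x y z : ℂ) : cdet x (y + z) = cdet x y + cdet x z := by
  simp [cdet]; ring
lemma cdet_add_left (x y z : ℂ) : cdet (x + y) z = cdet x z + cdet y z := by
  simp [cdet]; ring
lemma cdet_sub_right (x y z : ℂ) : cdet x (y - z) = cdet x y - cdet x z := by
  simp [cdet]; ring
lemma cdet_mul_mul (z x y : ℂ) : cdet (z*x) (z*y) = Complex.normSq z * cdet x y := by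
  simp [cdet, Complex.mul_re, Complex.mul_im, Complex.normSq]; ring
lemma abs_cdet_le (x y : ℂ) : |cdet x y| ≤ norm x * norm y := by
  have : cdet x y = ((starRingEnd ℂ) x * y).im := by
    simp [cdet, Complex.mul_im]; ring
  rw [this]
  calc |((starRingEnd ℂ) x * y).im| ≤ norm ((starRingEnd ℂ) x * y) := Complex.abs_im_le_norm _
    _ = norm x * norm y := by rw [norm_mul, Complex.norm_conj]
lemma cdet_eq_zero_imp {x y : ℂ} (hx : x ≠ 0) (h : cdet x y = 0) : ∃ r : ℝ, y = r • x := by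
  have h1 : ((starRingEnd ℂ) x * y).im = 0 := by
    simp [cdet, Complex.mul_im] at h ⊢; linarith
  refine ⟨((starRingEnd ℂ) x * y).re / Complex.normSq x, ?_⟩
  have hns : (Complex.normSq x : ℂ) ≠ 0 := by
    simp only [ne_eq, Complex.ofReal_eq_zero]
    exact fun hc => hx (Complex.normSq_eq_zero.mp hc)
  have hxy : ((starRingEnd ℂ) x * y) = (((starRingEnd ℂ) x * y).re : ℂ) := by
    exact Complex.ext (by simp) (by simp [h1])
  rw [Complex.real_smul]
  push_cast
  rw [div_mul_eq_mul_div, eq_div_iff hns]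
  calc y * (Complex.normSq x) = ((starRingEnd ℂ) x * y) * x := by
        rw [mul_comm ((starRingEnd ℂ) x) y, mul_assoc, mul_comm ((starRingEnd ℂ) x) x,
          Complex.mul_conj]
    _ = _ := by rw [hxy]; norm_num

lemma norm_exp_sub_exp (x y : ℝ) :
    norm (Complex.exp (x * Complex.I) - Complex.exp (y * Complex.I))
      = 2 * |Real.sin ((x - y) / 2)| := by
  have hx : Complex.exp (x * Complex.I) = Real.cos x + Real.sin x * Complex.I := by
    rw [Complex.exp_mul_I]; push_cast [Complex.ofReal_cos, Complex.ofReal_sin]; norm_num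
  have hy : Complex.exp (y * Complex.I) = Real.cos y + Real.sin y * Complex.I := by
    rw [Complex.exp_mul_I]; push_cast [Complex.ofReal_cos, Complex.ofReal_sin]; norm_num
  rw [hx, hy]
  rw [Real.abs_sin_half]
  rw [Complex.norm_def]
  have h1 : Complex.normSq ((Real.cos x + Real.sin x * Complex.I) - (Real.cos y + Real.sin y * Complex.I))
      = (Real.cos x - Real.cos y)^2 + (Real.sin x - Real.sin y)^2 := by
    simp only [Complex.normSq_apply, Complex.sub_re, Complex.sub_im, Complex.add_re,
      Complex.add_im, Complex.mul_re, Complex.mul_im, Complex.ofReal_re, Complex.ofReal_im,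
      Complex.I_re, Complex.I_im]
    ring
  rw [h1]
  have h2 : (Real.cos x - Real.cos y)^2 + (Real.sin x - Real.sin y)^2 = 4 * ((1 - Real.cos (x - y))/2) := by
    have := Real.cos_sub x y
    nlinarith [Real.sin_sq_add_cos_sq x, Real.sin_sq_add_cos_sq y]
  rw [h2]
  rw [show (4 : ℝ) * ((1 - Real.cos (x-y))/2) = 2^2 * ((1 - Real.cos (x-y))/2) by ring]
  rw [Real.sqrt_mul (by norm_num)]
  simp [Real.sqrt_sq]

/-- vertices of the regular w-gon -/
def pgon (w : ℕ) (k : Fin w) : ℂ := Complex.exp ((2 * π * k / w : ℝ) * Complex.I)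

lemma pgon_abs {w : ℕ} (k : Fin w) : norm (pgon w k) = 1 :=
  Complex.norm_exp_ofReal_mul_I _

lemma pgon_chord {w : ℕ} (hw : 1 ≤ w) (a b : Fin w) :
    norm (pgon w b - pgon w a) = 2 * |Real.sin (π * ((b : ℝ) - a) / w)| := by
  rw [pgon, pgon, norm_exp_sub_exp]
  congr 2
  have hw' : (w : ℝ) ≠ 0 := by positivity
  field_simp

lemma pgon_chord_nat {w : ℕ} (hw : 1 ≤ w) {a b : Fin w} (hab : a ≠ b) :
    norm (pgon w b - pgon w a) = 2 * Real.sin (π * (((b : ℤ) - a).natAbs : ℝ) / w)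
    ∧ 1 ≤ ((b : ℤ) - a).natAbs ∧ ((b : ℤ) - a).natAbs ≤ w - 1 := by
  have hb := b.isLt; have ha := a.isLt
  have hne : (b : ℤ) - a ≠ 0 := by
    intro hc
    exact hab (Fin.ext (by omega)).symm
  have h1 : 1 ≤ ((b : ℤ) - a).natAbs := by omega
  have h2 : ((b : ℤ) - a).natAbs ≤ w - 1 := by omega
  refine ⟨?_, h1, h2⟩
  rw [pgon_chord hw a b]
  have hw' : (0:ℝ) < w := by positivity
  have habs : |((b:ℝ) - a)| = (((b : ℤ) - a).natAbs : ℝ) := by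
    rw [Nat.cast_natAbs]
    push_cast
    rfl
  have hlt : π * (((b : ℤ) - a).natAbs : ℝ) / w < π := by
    rw [div_lt_iff₀ hw']
    have : (((b : ℤ) - a).natAbs : ℝ) < w := by
      have : ((b : ℤ) - a).natAbs < w := by omega
      exact_mod_cast this
    nlinarith [Real.pi_pos]
  have hpos : 0 < π * (((b : ℤ) - a).natAbs : ℝ) / w := by
    have : (1:ℝ) ≤ (((b : ℤ) - a).natAbs : ℝ) := by exact_mod_cast h1
    have := Real.pi_pos
    positivity
  congr 1
  rcases le_or_gt 0 ((b:ℝ) - a) with h | h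
  · rw [_root_.abs_of_nonneg h] at habs
    rw [show π * ((b:ℝ) - a) / w = π * (((b : ℤ) - a).natAbs : ℝ) / w by rw [← habs]]
    rw [_root_.abs_of_nonneg (Real.sin_nonneg_of_nonneg_of_le_pi (le_of_lt hpos) (le_of_lt hlt))]
  · rw [abs_of_neg h] at habs
    have : π * ((b:ℝ) - a) / w = -(π * (((b : ℤ) - a).natAbs : ℝ) / w) := by
      rw [← habs]; ring
    rw [this, Real.sin_neg, abs_neg,
      _root_.abs_of_nonneg (Real.sin_nonneg_of_nonneg_of_le_pi (le_of_lt hpos) (le_of_lt hlt))]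

lemma pgon_chord_ne {w : ℕ} (hw : 1 ≤ w) {a b : Fin w} (hab : a ≠ b) :
    pgon w b - pgon w a ≠ 0 := by
  obtain ⟨heq, h1, h2⟩ := pgon_chord_nat hw hab
  intro hc
  rw [hc] at heq
  simp only [norm_zero] at heq
  have hw' : (0:ℝ) < w := by positivity
  have hsin : 0 < Real.sin (π * (((b : ℤ) - a).natAbs : ℝ) / w) := by
    apply Real.sin_pos_of_pos_of_lt_pi
    · have : (1:ℝ) ≤ (((b : ℤ) - a).natAbs : ℝ) := by exact_mod_cast h1
      have := Real.pi_pos; positivity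
    · rw [div_lt_iff₀ hw']
      have : (((b : ℤ) - a).natAbs : ℝ) < w := by
        have : ((b : ℤ) - a).natAbs < w := by omega
        exact_mod_cast this
      nlinarith [Real.pi_pos]
  linarith

/-- three distinct points on the unit circle are not collinear -/
lemma circle_noncollinear {A B C : ℂ} (hA : norm A = 1) (hB : norm B = 1)
    (hC : norm C = 1) (hAB : A ≠ B) (hAC : A ≠ C) (hBC : B ≠ C)
    {r : ℝ} (h : C - A = r • (B - A)) : False := by
  have hP : B - A ≠ 0 := sub_ne_zero.mpr (Ne.symm hAB)
  have nA : Complex.normSq A = 1 := by rw [← Complex.sq_norm, hA]; norm_num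
  have nB : Complex.normSq B = 1 := by rw [← Complex.sq_norm, hB]; norm_num
  have nC : Complex.normSq C = 1 := by rw [← Complex.sq_norm, hC]; norm_num
  have hCa : C = A + r • (B - A) := by rw [← h]; ring
  have key : ∀ t : ℝ, Complex.normSq (A + t • (B - A))
      = 1 + 2 * t * ((starRingEnd ℂ) A * (B - A)).re + t^2 * Complex.normSq (B - A) := by
    intro t
    simp only [Complex.real_smul, Complex.normSq_apply, Complex.add_re, Complex.add_im,
      Complex.mul_re, Complex.mul_im, Complex.ofReal_re, Complex.ofReal_im,
      Complex.sub_re, Complex.sub_im, Complex.conj_re, Complex.conj_im]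
    simp only [Complex.normSq_apply] at nA
    nlinarith [nA]
  have k1 := key 1
  rw [show A + (1:ℝ) • (B - A) = B by simp, nB] at k1
  have kr := key r
  rw [← hCa, nC] at kr
  have hns : 0 < Complex.normSq (B - A) := Complex.normSq_pos.mpr hP
  have hfac : r * (r - 1) * Complex.normSq (B - A) = 0 := by linear_combination r*k1 - kr
  have : r = 0 ∨ r = 1 := by
    rcases mul_eq_zero.mp hfac with h' | h'
    · rcases mul_eq_zero.mp h' with h'' | h''
      · left; exact h''
      · right; linarith
    · exact absurd h' (ne_of_gt hns)
  rcases this with rfl | rfl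
  · simp at h; exact hAC (by linear_combination -h)
  · rw [one_smul] at h
    have : C = B := by linear_combination h
    exact hBC this.symm

/-- the unit circle in ℂ is infinite -/
lemma circle_infinite : Set.Infinite {z : ℂ | norm z = 1} := by
  have pi_pos := Real.pi_pos
  have hinj : Set.InjOn (fun t : ℝ => Complex.exp (t * Complex.I)) (Set.Ico 0 π) := by
    intro x hx y hy hxy
    by_contra hne
    have h2 : norm (Complex.exp (x * Complex.I) - Complex.exp (y * Complex.I))
        = 2 * |Real.sin ((x - y)/2)| := norm_exp_sub_exp x y
    rw [show Complex.exp ((x:ℂ) * Complex.I) = Complex.exp ((y:ℂ) * Complex.I) from hxy,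
      sub_self, norm_zero] at h2
    have : Real.sin ((x-y)/2) ≠ 0 := by
      intro hc
      have hb : -(π) < (x-y)/2 * 2 := by simp only [Set.mem_Ico] at hx hy; linarith
      have hb2 : (x-y)/2 * 2 < π := by simp only [Set.mem_Ico] at hx hy; linarith
      have := Real.sin_eq_zero_iff_of_lt_of_lt (by linarith : -π < (x-y)/2) (by linarith : (x-y)/2 < π)
      rw [this] at hc
      exact hne (by linarith)
    have : |Real.sin ((x-y)/2)| > 0 := abs_pos.mpr this
    linarith
  have : Set.Infinite ((fun t : ℝ => Complex.exp (t * Complex.I)) '' (Set.Ico 0 π)) :=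
    Set.Infinite.image hinj (Set.Ico_infinite pi_pos)
  apply this.mono
  rintro z ⟨t, _, rfl⟩
  exact Complex.norm_exp_ofReal_mul_I t

/-- finiteness of the bad rotations for one (chord, diff) pair -/
lemma bad_rot_finite {c d : ℂ} (hc : c ≠ 0) (hd : d ≠ 0) :
    Set.Finite {z : ℂ | norm z = 1 ∧ cdet (z * c) d = 0} := by
  have hcabs : norm c ≠ 0 := by simpa using hc
  apply Set.Finite.subset ((Set.finite_singleton
      (-(d / ((norm d / norm c : ℝ) * c)))).insert
      (d / ((norm d / norm c : ℝ) * c)))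
  rintro z ⟨hz1, hz2⟩
  have hzc : z * c ≠ 0 := mul_ne_zero (by intro hc'; rw [hc'] at hz1; simp at hz1) hc
  obtain ⟨r, hr⟩ := cdet_eq_zero_imp hzc hz2
  have hrne : r ≠ 0 := by
    intro hc'; rw [hc', zero_smul] at hr; exact hd hr
  have hz : z = d / ((r:ℝ) * c) := by
    rw [hr, Complex.real_smul]
    have hrc : ((r:ℂ)) ≠ 0 := by exact_mod_cast hrne
    field_simp
  have habs : |r| = norm d / norm c := by
    have : norm d = norm ((r:ℂ) * (z * c)) := by rw [← Complex.real_smul, ← hr]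
    rw [norm_mul, norm_mul, hz1, Complex.norm_real, Real.norm_eq_abs] at this
    rw [this]; field_simp
  have hD : (0:ℝ) ≤ norm d / norm c := by positivity
  rcases (abs_eq hD).mp habs with h' | h'
  · simp only [Set.mem_insert_iff, Set.mem_singleton_iff]
    left
    rw [hz, h']
  · simp only [Set.mem_insert_iff, Set.mem_singleton_iff]
    right
    rw [hz, h']
    have : ((-(norm d / norm c):ℝ):ℂ) * c
        = -(((norm d / norm c : ℝ):ℂ) * c) := by push_cast; ring
    rw [this, div_neg]

lemma ncard_prod {α β : Type*} (s : Set α) (t : Set β) :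
    (s ×ˢ t).ncard = s.ncard * t.ncard := by
  rw [← Nat.card_coe_set_eq, ← Nat.card_coe_set_eq, ← Nat.card_coe_set_eq,
    ← Nat.card_prod]
  exact Nat.card_congr (Equiv.Set.prod s t)

/-- perturbation bound for distances -/
lemma dist_pert (A B x y : ℂ) : |dist (A + x) (B + y) - dist A B| ≤ norm x + norm y := by
  rw [Complex.dist_eq, Complex.dist_eq, show A + x - (B + y) = (A - B) + (x - y) by ring]
  calc |norm (A - B + (x - y)) - norm (A - B)|
      ≤ norm (A - B + (x - y) - (A - B)) := by
        have := abs_norm_sub_norm_le (A - B + (x - y)) (A - B)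
        simpa using this
    _ = norm (x - y) := by ring_nf
    _ ≤ norm x + norm y := by
        simpa using norm_sub_le x y

/-- the standard isometry between `ℂ` and the Euclidean plane -/
def EE : ℂ ≃ₗᵢ[ℝ] EuclideanSpace ℝ (Fin 2) := Complex.orthonormalBasisOneI.repr

lemma EE_openSegment (a b x : ℂ) :
    EE x ∈ openSegment ℝ (EE a) (EE b) ↔ x ∈ openSegment ℝ a b := by
  constructor
  · rintro ⟨xa, xb, h1, h2, h3, h4⟩
    refine ⟨xa, xb, h1, h2, h3, EE.injective ?_⟩
    rw [← h4, map_add, map_smul, map_smul]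
  · rintro ⟨xa, xb, h1, h2, h3, h4⟩
    exact ⟨xa, xb, h1, h2, h3, by rw [← h4, map_add, map_smul, map_smul]⟩

lemma openSegment_param {a b x : ℂ} (h : x ∈ openSegment ℝ a b) :
    ∃ β : ℝ, 0 < β ∧ β < 1 ∧ x - a = β • (b - a) := by
  obtain ⟨xa, xb, h1, h2, h3, h4⟩ := h
  refine ⟨xb, h2, by linarith, ?_⟩
  have hxa : xa = 1 - xb := by linarith
  rw [← h4, hxa]
  rw [Complex.real_smul, Complex.real_smul, Complex.real_smul]
  push_cast
  ring

lemma span_norm_pm {t t' : ℂ} (ht : t ≠ 0)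
    (hsp : Submodule.span ℝ {(EE t' : EuclideanSpace ℝ (Fin 2))} = Submodule.span ℝ {EE t})
    (hn : ‖t'‖ = ‖t‖) : t' = t ∨ t' = -t := by
  have h1 : (EE t' : EuclideanSpace ℝ (Fin 2)) ∈ Submodule.span ℝ {(EE t : EuclideanSpace ℝ (Fin 2))} := by
    rw [← hsp]
    exact Submodule.mem_span_singleton_self _
  obtain ⟨c, hc⟩ := Submodule.mem_span_singleton.mp h1
  have hct : t' = c • t := by
    apply EE.injective
    rw [map_smul, hc]
  have hnc : |c| * ‖t‖ = ‖t‖ := by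
    rw [← Real.norm_eq_abs, ← norm_smul, ← hct, hn]
  have htn : ‖t‖ ≠ 0 := norm_ne_zero_iff.mpr ht
  have hc1 : |c| = 1 := by
    have habs : norm t ≠ 0 := by simpa using htn
    field_simp at hnc
    tauto
  rcases (abs_eq (by norm_num : (0:ℝ) ≤ 1)).mp hc1 with h' | h'
  · left; rw [hct, h', one_smul]
  · right; rw [hct, h', neg_one_smul]

end Helpers

open Complex Real in
set_option maxHeartbeats 2000000 in
/-- Let `H` be a graph with a drawing having at most `s` distinct
edge-slopes and at most `ℓ` distinct edge-lengths (`s, ℓ ≥ 1`). If `G` admits an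
`H`-partition of width `w ≥ 1`, then `dn G ≤ s·ℓ·w·(w−1) + ⌊w/2⌋ + ℓ`. -/
theorem stmt15 {V W : Type*} [Fintype V] [Fintype W]
    (H : SimpleGraph W) (G : SimpleGraph V) (s ℓ w : ℕ)
    (hs : 1 ≤ s) (hℓ : 1 ≤ ℓ) (hw : 1 ≤ w)
    (g : W → Plane) (hg : H.IsDrawing g)
    (hslope : (H.edgeSlopes g).ncard ≤ s) (hlen : (H.edgeLengths g).ncard ≤ ℓ)
    (P : V → W) (hPsurj : Function.Surjective P)
    (hH : ∀ i j : W, i ≠ j →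
      (H.Adj i j ↔ ∃ u v : V, G.Adj u v ∧ P u = i ∧ P v = j))
    (hwidth : ∀ i : W, (P ⁻¹' {i}).ncard ≤ w) :
    G.dn ≤ s * ℓ * w * (w - 1) + w / 2 + ℓ := by
  classical
  -- complex version of g
  set gc : W → ℂ := fun i => EE.symm (g i) with hgc_def
  have hginj : Function.Injective g := hg.1
  have hEEgc : ∀ i, EE (gc i) = g i := fun i => EE.apply_symm_apply (g i)
  have hgcinj : Function.Injective gc := by
    intro i j hij
    apply hginj
    rw [← hEEgc, ← hEEgc, hij]
  have hgseg : ∀ i j k : W, H.Adj i j → gc k ∉ openSegment ℝ (gc i) (gc j) := by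
    intro i j k hadj hmem
    have h2 := (EE_openSegment (gc i) (gc j) (gc k)).mpr hmem
    rw [hEEgc, hEEgc, hEEgc] at h2
    exact hg.2 i j k hadj h2
  -- index of each vertex within its part
  have hfib : ∀ i : W, ∃ e : V → Fin w, Set.InjOn e (P ⁻¹' {i}) := by
    intro i
    haveI : Fintype ↥(P ⁻¹' {i}) := Fintype.ofFinite _
    have hcard : Fintype.card ↥(P ⁻¹' {i}) ≤ Fintype.card (Fin w) := by
      rw [Fintype.card_fin, ← Nat.card_eq_fintype_card, Nat.card_coe_set_eq]
      exact hwidth i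
    obtain ⟨emb⟩ := Function.Embedding.nonempty_of_card_le hcard
    refine ⟨fun v => if h : P v = i then emb ⟨v, h⟩ else ⟨0, hw⟩, ?_⟩
    intro u hu v hv huv
    simp only [Set.mem_preimage, Set.mem_singleton_iff] at hu hv
    simp only [dif_pos hu, dif_pos hv] at huv
    have := emb.injective huv
    exact Subtype.ext_iff.mp this
  choose idxF hidxF using hfib
  set idx : V → Fin w := fun u => idxF (P u) u with hidx_def
  have hidx : ∀ u v : V, P u = P v → idx u = idx v → u = v := by
    intro u v hP hi
    refine hidxF (P u) (by simp) (by simp [hP.symm]) ?_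
    simpa [hidx_def, hP] using hi
  have hGH : ∀ u v : V, G.Adj u v → P u ≠ P v → H.Adj (P u) (P v) := by
    intro u v hadj hne
    exact (hH (P u) (P v) hne).mpr ⟨u, v, hadj, rfl, rfl⟩
  -- choose a good rotation ω
  obtain ⟨ω, hω1, hωgood⟩ : ∃ ω : ℂ, norm ω = 1 ∧
      ∀ (a b : Fin w), a ≠ b → ∀ i j : W, i ≠ j →
        cdet (ω * (pgon w b - pgon w a)) (gc j - gc i) ≠ 0 := by
    set S : ((Fin w × Fin w) × (W × W)) → Set ℂ := fun q =>
      if q.1.1 ≠ q.1.2 ∧ q.2.1 ≠ q.2.2 then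
        {z : ℂ | norm z = 1 ∧ cdet (z * (pgon w q.1.2 - pgon w q.1.1))
          (gc q.2.2 - gc q.2.1) = 0}
      else ∅ with hS_def
    have hSfin : ∀ q, (S q).Finite := by
      intro q
      simp only [hS_def]
      split_ifs with hq
      · exact bad_rot_finite (pgon_chord_ne hw hq.1) (sub_ne_zero.mpr fun hc => hq.2 (hgcinj hc).symm)
      · exact Set.finite_empty
    have hBad : (⋃ q, S q).Finite := Set.finite_iUnion hSfin
    obtain ⟨ω, hωmem⟩ := (circle_infinite.diff hBad).nonempty
    refine ⟨ω, hωmem.1, ?_⟩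
    intro a b hab i j hij hdet
    apply hωmem.2
    refine Set.mem_iUnion.mpr ⟨((a, b), (i, j)), ?_⟩
    rw [hS_def]
    simp only [ne_eq]
    rw [if_pos ⟨hab, hij⟩]
    exact ⟨hωmem.1, hdet⟩
  have hωne : ω ≠ 0 := by intro h; rw [h] at hω1; simp at hω1
  -- the family of drawings
  set F : ℝ → V → ℂ := fun ε u => gc (P u) + ((ε:ℂ) * ω) * pgon w (idx u) with hF_def
  have habsz : ∀ (ε : ℝ), 0 ≤ ε → ∀ x : ℂ,
      norm (((ε:ℂ)*ω) * x) = ε * norm x := by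
    intro ε hε x
    rw [norm_mul, norm_mul, Complex.norm_real, Real.norm_eq_abs, hω1, _root_.abs_of_nonneg hε]
    ring
  have hchord2 : ∀ a b : Fin w, norm (pgon w a - pgon w b) ≤ 2 := by
    intro a b
    calc norm (pgon w a - pgon w b) ≤ norm (pgon w a) + norm (pgon w b) := by
          simpa using norm_sub_le (pgon w a) (pgon w b)
      _ = 2 := by rw [pgon_abs, pgon_abs]; norm_num
  have hFdiff : ∀ (ε : ℝ) (u v : V), F ε u - F ε v
      = (gc (P u) - gc (P v)) + ((ε:ℂ)*ω) * (pgon w (idx u) - pgon w (idx v)) := by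
    intro ε u v
    simp only [hF_def]
    ring
  have hFdist : ∀ (ε : ℝ), 0 ≤ ε → ∀ u v : V,
      |dist (F ε u) (F ε v) - dist (gc (P u)) (gc (P v))| ≤ 2*ε := by
    intro ε hε u v
    have h := dist_pert (gc (P u)) (gc (P v)) (((ε:ℂ)*ω) * pgon w (idx u))
      (((ε:ℂ)*ω) * pgon w (idx v))
    rw [habsz ε hε, habsz ε hε, pgon_abs, pgon_abs] at h
    simp only [hF_def]
    calc |dist (gc (P u) + ε * ω * pgon w (idx u)) (gc (P v) + ε * ω * pgon w (idx v))
        - dist (gc (P u)) (gc (P v))| ≤ ε * 1 + ε * 1 := h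
      _ = 2 * ε := by ring
  have hzne : ∀ ε : ℝ, 0 < ε → ((ε:ℂ) * ω) ≠ 0 := fun ε hε =>
    mul_ne_zero (Complex.ofReal_ne_zero.mpr (ne_of_gt hε)) hωne
  -- eventual injectivity
  have hIne : ∀ᶠ ε in nhdsWithin (0:ℝ) (Set.Ioi 0),
      ∀ q : V × V, q.1 ≠ q.2 → F ε q.1 ≠ F ε q.2 := by
    rw [Filter.eventually_all]
    intro q
    by_cases hPq : P q.1 = P q.2
    · filter_upwards [self_mem_nhdsWithin] with ε hε hne hFeq
      have h0 : F ε q.1 - F ε q.2 = 0 := sub_eq_zero.mpr hFeq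
      rw [hFdiff, hPq, sub_self, zero_add] at h0
      have hidxne : idx q.2 ≠ idx q.1 := fun h => hne ((hidx q.2 q.1 hPq.symm h).symm)
      exact (mul_ne_zero (hzne ε hε) (pgon_chord_ne hw hidxne)) h0
    · have hD : 0 < dist (gc (P q.1)) (gc (P q.2)) :=
        dist_pos.mpr (fun hc => hPq (hgcinj hc))
      filter_upwards [Ioo_mem_nhdsGT_of_mem
        (⟨le_refl (0:ℝ), by linarith⟩ : (0:ℝ) ∈ Set.Ico 0 (dist (gc (P q.1)) (gc (P q.2)) / 4))]
        with ε hε hne hFeq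
      have hb := hFdist ε (le_of_lt hε.1) q.1 q.2
      rw [hFeq, dist_self] at hb
      have hb' := abs_le.mp hb
      have hb2 := hε.2
      linarith [hb'.1]
  -- eventual drawing condition
  have hSeg : ∀ᶠ ε in nhdsWithin (0:ℝ) (Set.Ioi 0),
      ∀ q : V × V × V, G.Adj q.1 q.2.1 →
        F ε q.2.2 ∉ openSegment ℝ (F ε q.1) (F ε q.2.1) := by
    rw [Filter.eventually_all]
    rintro ⟨u, v, x⟩
    simp only
    by_cases hadj : G.Adj u v
    swap
    · filter_upwards with ε h
      exact absurd h hadj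
    have huv : u ≠ v := hadj.ne
    by_cases hxu : x = u
    · subst hxu
      filter_upwards [hIne] with ε hinj _ hmem
      exact hinj (x, v) huv (left_mem_openSegment_iff.mp hmem)
    by_cases hxv : x = v
    · subst hxv
      filter_upwards [hIne] with ε hinj _ hmem
      exact hinj (u, x) huv (right_mem_openSegment_iff.mp hmem)
    by_cases hij : P u = P v
    · by_cases hki : P x = P u
      · -- all three in the same part: non-collinearity of the polygon
        filter_upwards [self_mem_nhdsWithin] with ε hε _ hmem
        obtain ⟨β, hβ0, hβ1, hβ⟩ := openSegment_param hmem
        have h1 : F ε x - F ε u = ((ε:ℂ)*ω) * (pgon w (idx x) - pgon w (idx u)) := by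
          rw [hFdiff, hki, sub_self, zero_add]
        have h2 : F ε v - F ε u = ((ε:ℂ)*ω) * (pgon w (idx v) - pgon w (idx u)) := by
          rw [hFdiff, ← hij, sub_self, zero_add]
        rw [h1, h2] at hβ
        have hQP : pgon w (idx x) - pgon w (idx u)
            = β • (pgon w (idx v) - pgon w (idx u)) := by
          apply mul_left_cancel₀ (hzne ε hε)
          rw [hβ, Complex.real_smul, Complex.real_smul]
          ring
        have hab : idx u ≠ idx v := fun h => huv (hidx u v hij h)
        have hac : idx u ≠ idx x := fun h => hxu (hidx x u hki h.symm)
        have hbc : idx v ≠ idx x := fun h =>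
          hxv (hidx x v (hki.trans hij) h.symm)
        have hpab : pgon w (idx u) ≠ pgon w (idx v) := fun h =>
          (pgon_chord_ne hw hab.symm) (by rw [h, sub_self])
        have hpac : pgon w (idx u) ≠ pgon w (idx x) := fun h =>
          (pgon_chord_ne hw hac.symm) (by rw [h, sub_self])
        have hpbc : pgon w (idx v) ≠ pgon w (idx x) := fun h =>
          (pgon_chord_ne hw hbc.symm) (by rw [h, sub_self])
        exact circle_noncollinear (pgon_abs (idx u)) (pgon_abs (idx v)) (pgon_abs (idx x))
          hpab hpac hpbc hQP
      · -- x in a different part than the (intra-part) edge uv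
        have hD : 0 < dist (gc (P u)) (gc (P x)) :=
          dist_pos.mpr (fun hc => hki ((hgcinj hc).symm))
        filter_upwards [Ioo_mem_nhdsGT_of_mem
          (⟨le_refl (0:ℝ), by linarith⟩ : (0:ℝ) ∈ Set.Ico 0 (dist (gc (P u)) (gc (P x)) / 4))]
          with ε hε _ hmem
        obtain ⟨β, hβ0, hβ1, hβ⟩ := openSegment_param hmem
        have e1 : dist (F ε u) (F ε x) = β * dist (F ε u) (F ε v) := by
          rw [dist_comm (F ε u) (F ε x), Complex.dist_eq, hβ, dist_comm (F ε u) (F ε v),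
            Complex.dist_eq, Complex.real_smul, norm_mul, Complex.norm_real, Real.norm_eq_abs,
            _root_.abs_of_nonneg (le_of_lt hβ0)]
        have b1 := abs_le.mp (hFdist ε (le_of_lt hε.1) u x)
        have b2 := abs_le.mp (hFdist ε (le_of_lt hε.1) u v)
        rw [hij, dist_self] at b2
        have hd2 : dist (F ε u) (F ε v) ≤ 2 * ε := by linarith [b2.2]
        have hd1 : dist (gc (P u)) (gc (P x)) - 2*ε ≤ dist (F ε u) (F ε x) := by
          linarith [b1.1]
        have hβd : β * dist (F ε u) (F ε v) ≤ 2 * ε := by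
          nlinarith [dist_nonneg (x := F ε u) (y := F ε v)]
        have := hε.2
        linarith
    · -- inter-part edge
      have hHij : H.Adj (P u) (P v) := hGH u v hadj hij
      have htne : gc (P v) - gc (P u) ≠ 0 :=
        sub_ne_zero.mpr (fun hc => hij ((hgcinj hc).symm))
      by_cases hki : P x = P u
      · -- x in part of u
        have hca : idx x ≠ idx u := fun h => hxu (hidx x u hki h)
        have hcd : cdet (ω * (pgon w (idx x) - pgon w (idx u))) (gc (P v) - gc (P u)) ≠ 0 :=
          hωgood (idx u) (idx x) hca.symm (P u) (P v) hij
        have hc0pos : 0 < |cdet (ω * (pgon w (idx x) - pgon w (idx u))) (gc (P v) - gc (P u))| :=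
          abs_pos.mpr hcd
        filter_upwards [Ioo_mem_nhdsGT_of_mem
          (⟨le_refl (0:ℝ), by linarith⟩ : (0:ℝ) ∈ Set.Ico 0
            (|cdet (ω * (pgon w (idx x) - pgon w (idx u))) (gc (P v) - gc (P u))| / 8))]
          with ε hε _ hmem
        obtain ⟨β, hβ0, hβ1, hβ⟩ := openSegment_param hmem
        have hdet0 : cdet (F ε v - F ε u) (F ε x - F ε u) = 0 := by
          rw [hβ, cdet_smul_right, cdet_self, mul_zero]
        have h1 : F ε x - F ε u = ((ε:ℂ)*ω) * (pgon w (idx x) - pgon w (idx u)) := by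
          rw [hFdiff, hki, sub_self, zero_add]
        have h2 : F ε v - F ε u = (gc (P v) - gc (P u))
            + ((ε:ℂ)*ω) * (pgon w (idx v) - pgon w (idx u)) := by
          rw [hFdiff]
        rw [h1, h2] at hdet0
        rw [cdet_add_left] at hdet0
        have e1 : cdet (gc (P v) - gc (P u)) (((ε:ℂ)*ω) * (pgon w (idx x) - pgon w (idx u)))
            = ε * cdet (gc (P v) - gc (P u)) (ω * (pgon w (idx x) - pgon w (idx u))) := by
          rw [show ((ε:ℂ)*ω) * (pgon w (idx x) - pgon w (idx u))
            = ε • (ω * (pgon w (idx x) - pgon w (idx u))) by rw [Complex.real_smul]; ring]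
          rw [cdet_smul_right]
        have e2 : cdet (((ε:ℂ)*ω) * (pgon w (idx v) - pgon w (idx u)))
            (((ε:ℂ)*ω) * (pgon w (idx x) - pgon w (idx u)))
            = (ε*ε) * cdet (pgon w (idx v) - pgon w (idx u))
              (pgon w (idx x) - pgon w (idx u)) := by
          rw [show ((ε:ℂ)*ω) * (pgon w (idx v) - pgon w (idx u))
            = ((ε:ℂ)*ω) * (pgon w (idx v) - pgon w (idx u)) from rfl]
          rw [cdet_mul_mul, Complex.normSq_mul, Complex.normSq_ofReal,
            ← Complex.sq_norm, hω1]
          ring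
        rw [e1, e2] at hdet0
        have hsym : cdet (gc (P v) - gc (P u)) (ω * (pgon w (idx x) - pgon w (idx u)))
            = - cdet (ω * (pgon w (idx x) - pgon w (idx u))) (gc (P v) - gc (P u)) :=
          cdet_comm _ _
        have hbound : |cdet (pgon w (idx v) - pgon w (idx u))
            (pgon w (idx x) - pgon w (idx u))| ≤ 4 := by
          calc |cdet (pgon w (idx v) - pgon w (idx u)) (pgon w (idx x) - pgon w (idx u))|
              ≤ norm (pgon w (idx v) - pgon w (idx u))
                * norm (pgon w (idx x) - pgon w (idx u)) := abs_cdet_le _ _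
            _ ≤ 2 * 2 := by
                have := hchord2 (idx v) (idx u); have := hchord2 (idx x) (idx u)
                nlinarith [norm_nonneg (pgon w (idx v) - pgon w (idx u)),
                  norm_nonneg (pgon w (idx x) - pgon w (idx u))]
            _ = 4 := by norm_num
        -- from hdet0 : ε * X + ε*ε*Y = 0 with |X| = c0 and |Y| ≤ 4:
        have hX : |cdet (gc (P v) - gc (P u)) (ω * (pgon w (idx x) - pgon w (idx u)))|
            = |cdet (ω * (pgon w (idx x) - pgon w (idx u))) (gc (P v) - gc (P u))| := by
          rw [hsym, abs_neg]
        have hε0 := hε.1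
        have hε8 := hε.2
        have hXY : cdet (gc (P v) - gc (P u)) (ω * (pgon w (idx x) - pgon w (idx u)))
            = - (ε * cdet (pgon w (idx v) - pgon w (idx u))
              (pgon w (idx x) - pgon w (idx u))) := by
          have hne' : ε ≠ 0 := ne_of_gt hε0
          have h' : ε * (cdet (gc (P v) - gc (P u)) (ω * (pgon w (idx x) - pgon w (idx u)))
              + ε * cdet (pgon w (idx v) - pgon w (idx u))
                (pgon w (idx x) - pgon w (idx u))) = 0 := by
            linear_combination hdet0
          have h'' := (mul_eq_zero.mp h').resolve_left hne'
          linarith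
        have : |cdet (gc (P v) - gc (P u)) (ω * (pgon w (idx x) - pgon w (idx u)))| ≤ ε * 4 := by
          rw [hXY, abs_neg, abs_mul, _root_.abs_of_nonneg (le_of_lt hε0)]
          nlinarith
        rw [hX] at this
        linarith
      · by_cases hkj : P x = P v
        · -- x in part of v
          have hcb : idx x ≠ idx v := fun h => hxv (hidx x v hkj h)
          have hcd : cdet (ω * (pgon w (idx x) - pgon w (idx v))) (gc (P v) - gc (P u)) ≠ 0 :=
            hωgood (idx v) (idx x) hcb.symm (P u) (P v) hij
          have hc0pos : 0 < |cdet (ω * (pgon w (idx x) - pgon w (idx v))) (gc (P v) - gc (P u))| :=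
            abs_pos.mpr hcd
          filter_upwards [Ioo_mem_nhdsGT_of_mem
            (⟨le_refl (0:ℝ), by linarith⟩ : (0:ℝ) ∈ Set.Ico 0
              (|cdet (ω * (pgon w (idx x) - pgon w (idx v))) (gc (P v) - gc (P u))| / 8))]
            with ε hε _ hmem
          obtain ⟨β, hβ0, hβ1, hβ⟩ := openSegment_param hmem
          have hdet0 : cdet (F ε v - F ε u) (F ε x - F ε u) = 0 := by
            rw [hβ, cdet_smul_right, cdet_self, mul_zero]
          have h1 : F ε x - F ε u = (gc (P v) - gc (P u))
              + ((ε:ℂ)*ω) * (pgon w (idx x) - pgon w (idx u)) := by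
            rw [hFdiff, hkj]
          have h2 : F ε v - F ε u = (gc (P v) - gc (P u))
              + ((ε:ℂ)*ω) * (pgon w (idx v) - pgon w (idx u)) := by
            rw [hFdiff]
          rw [h1, h2] at hdet0
          -- expand fully into scalar form
          set t := gc (P v) - gc (P u)
          set Pc := pgon w (idx v) - pgon w (idx u)
          set Qc := pgon w (idx x) - pgon w (idx u)
          have hω2 : ω.re*ω.re + ω.im*ω.im = 1 := by
            have h1 : Complex.normSq ω = 1 := by
              rw [← Complex.sq_norm, hω1]; norm_num
            rw [Complex.normSq_apply] at h1
            exact h1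
          have expand : cdet (t + ((ε:ℂ)*ω) * Pc) (t + ((ε:ℂ)*ω) * Qc)
              = ε * cdet t (ω * (Qc - Pc)) + (ε*ε) * cdet Pc Qc := by
            simp only [cdet, Complex.add_re, Complex.add_im, Complex.mul_re, Complex.mul_im,
              Complex.sub_re, Complex.sub_im, Complex.ofReal_re, Complex.ofReal_im]
            linear_combination (ε*ε*(Pc.re*Qc.im - Pc.im*Qc.re)) * hω2
          rw [expand] at hdet0
          have hQP : Qc - Pc = pgon w (idx x) - pgon w (idx v) := by
            simp only [Qc, Pc]; ring
          rw [hQP] at hdet0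
          have hsym : cdet t (ω * (pgon w (idx x) - pgon w (idx v)))
              = - cdet (ω * (pgon w (idx x) - pgon w (idx v))) t := cdet_comm _ _
          have hbound : |cdet Pc Qc| ≤ 4 := by
            calc |cdet Pc Qc| ≤ norm Pc * norm Qc := abs_cdet_le _ _
              _ ≤ 2 * 2 := by
                  have := hchord2 (idx v) (idx u); have := hchord2 (idx x) (idx u)
                  nlinarith [norm_nonneg Pc, norm_nonneg Qc]
              _ = 4 := by norm_num
          have hε0 := hε.1
          have hε8 := hε.2
          have hXY : cdet t (ω * (pgon w (idx x) - pgon w (idx v)))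
              = - (ε * cdet Pc Qc) := by
            have hne' : ε ≠ 0 := ne_of_gt hε0
            have h' : ε * (cdet t (ω * (pgon w (idx x) - pgon w (idx v))) + ε * cdet Pc Qc) = 0 := by
              linear_combination hdet0
            have h'' := (mul_eq_zero.mp h').resolve_left hne'
            linarith
          have hfin : |cdet t (ω * (pgon w (idx x) - pgon w (idx v)))| ≤ ε * 4 := by
            rw [hXY, abs_neg, abs_mul, _root_.abs_of_nonneg (le_of_lt hε0)]
            nlinarith
          rw [hsym, abs_neg] at hfin
          linarith
        · -- x in a third part
          have hgku : gc (P x) ≠ gc (P u) := fun hc => hki (hgcinj hc)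
          have hgkv : gc (P x) ≠ gc (P v) := fun hc => hkj (hgcinj hc)
          set M := dist (gc (P u)) (gc (P x)) + dist (gc (P x)) (gc (P v))
            - dist (gc (P u)) (gc (P v)) with hM_def
          have hM : 0 < M := by
            rcases lt_or_ge 0 M with h | h
            · exact h
            exfalso
            have htr := dist_triangle (gc (P u)) (gc (P x)) (gc (P v))
            have heq : dist (gc (P u)) (gc (P x)) + dist (gc (P x)) (gc (P v))
                = dist (gc (P u)) (gc (P v)) := by
              simp only [hM_def] at h
              linarith
            have hwb : Wbtw ℝ (gc (P u)) (gc (P x)) (gc (P v)) :=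
              dist_add_dist_eq_iff.mp heq
            have hseg : gc (P x) ∈ segment ℝ (gc (P u)) (gc (P v)) :=
              mem_segment_iff_wbtw.mpr hwb
            exact hgseg (P u) (P v) (P x) hHij
              (mem_openSegment_of_ne_left_right (Ne.symm hgku) (Ne.symm hgkv) hseg)
          filter_upwards [Ioo_mem_nhdsGT_of_mem
            (⟨le_refl (0:ℝ), by linarith⟩ : (0:ℝ) ∈ Set.Ico 0 (M / 8))]
            with ε hε _ hmem
          obtain ⟨β, hβ0, hβ1, hβ⟩ := openSegment_param hmem
          have e1 : dist (F ε u) (F ε x) = β * dist (F ε u) (F ε v) := by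
            rw [dist_comm (F ε u) (F ε x), Complex.dist_eq, hβ, dist_comm (F ε u) (F ε v),
              Complex.dist_eq, Complex.real_smul, norm_mul, Complex.norm_real, Real.norm_eq_abs,
              _root_.abs_of_nonneg (le_of_lt hβ0)]
          have e2 : dist (F ε x) (F ε v) = (1-β) * dist (F ε u) (F ε v) := by
            have hxv' : F ε x - F ε v = (β - 1) • (F ε v - F ε u) := by
              rw [show F ε x - F ε v = (F ε x - F ε u) - (F ε v - F ε u) by ring, hβ]
              rw [Complex.real_smul, Complex.real_smul]
              push_cast
              ring
            rw [Complex.dist_eq, hxv', Complex.real_smul, norm_mul, Complex.norm_real, Real.norm_eq_abs,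
              abs_of_neg (by linarith : β - 1 < 0), dist_comm (F ε u) (F ε v), Complex.dist_eq]
            ring
          have hsum : dist (F ε u) (F ε x) + dist (F ε x) (F ε v)
              = dist (F ε u) (F ε v) := by
            rw [e1, e2]; ring
          have b1 := abs_le.mp (hFdist ε (le_of_lt hε.1) u x)
          have b2 := abs_le.mp (hFdist ε (le_of_lt hε.1) x v)
          have b3 := abs_le.mp (hFdist ε (le_of_lt hε.1) u v)
          have := hε.2
          simp only [hM_def] at this
          linarith [b1.1, b2.1, b3.2]
  -- choose ε
  have h0 : ∀ᶠ ε in nhdsWithin (0:ℝ) (Set.Ioi 0), ε ∈ Set.Ioi (0:ℝ) :=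
    eventually_mem_nhdsWithin
  obtain ⟨ε, hε0, hinj, hseg⟩ := (h0.and (hIne.and hSeg)).exists
  have hε0' : (0:ℝ) < ε := hε0
  set fC : V → ℂ := F ε with hfC_def
  set f : V → Plane := fun u => EE (fC u) with hf_def
  have hfinj : Function.Injective f := by
    intro a b hab
    by_contra hne
    exact hinj (a, b) hne (EE.injective hab)
  have hfdraw : G.IsDrawing f := by
    refine ⟨hfinj, ?_⟩
    intro a b c hadj2 hmem
    exact hseg (a, b, c) hadj2 ((EE_openSegment (fC a) (fC b) (fC c)).mp hmem)
  have hdn : G.dn ≤ (G.edgeLengths f).ncard := Nat.sInf_le ⟨f, hfdraw, rfl⟩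
  refine le_trans hdn ?_
  -- the three families of lengths
  set T : Set ℂ := {t : ℂ | ∃ i j : W, H.Adj i j ∧ t = gc j - gc i} with hT_def
  set h : ℂ → Submodule ℝ Plane × ℝ := fun t => (Submodule.span ℝ {(EE t : Plane)}, ‖t‖)
    with hh_def
  set T' : Set ℂ := Function.invFunOn h T '' (h '' T) with hT'_def
  set OD : Set (Fin w × Fin w) := {q | q.1 ≠ q.2} with hOD_def
  set val : ℂ × (Fin w × Fin w) → ℝ :=
    fun q => norm (q.1 + ((ε:ℂ)*ω) * (pgon w q.2.2 - pgon w q.2.1)) with hval_def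
  set A' : Set ℝ := val '' (T' ×ˢ OD) with hA'_def
  set C' : Set ℝ := (fun m : ℕ => ε * (2 * Real.sin (π * m / w))) '' ↑(Finset.Icc 1 (w/2))
    with hC'_def
  have hTfin : T.Finite := by
    apply Set.Finite.subset (Set.finite_range (fun q : W × W => gc q.2 - gc q.1))
    rintro t ⟨i, j, _, rfl⟩
    exact ⟨(i, j), rfl⟩
  have hT'fin : T'.Finite := (hTfin.image h).image _
  have hODfin : OD.Finite := Set.toFinite _
  have hA'fin : A'.Finite := (hT'fin.prod hODfin).image val
  have hBfin : (H.edgeLengths g).Finite := by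
    apply Set.Finite.subset (Set.finite_range (fun q : W × W => dist (g q.1) (g q.2)))
    rintro d ⟨i, j, _, hd⟩
    exact ⟨(i, j), hd⟩
  have hC'fin : C'.Finite := ((Finset.Icc 1 (w/2)).finite_toSet).image _
  have hgcdist : ∀ i j : W, dist (g i) (g j) = norm (gc i - gc j) := by
    intro i j
    rw [← hEEgc i, ← hEEgc j, EE.dist_map, Complex.dist_eq]
  -- the inclusion
  have hsub : G.edgeLengths f ⊆ (A' ∪ H.edgeLengths g) ∪ C' := by
    rintro d ⟨u, v, hadj, rfl⟩
    have hdist : dist (f u) (f v) = norm (fC u - fC v) := by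
      simp only [hf_def]
      rw [EE.dist_map, Complex.dist_eq]
    by_cases hij : P u = P v
    · -- intra-part edge : C'
      have huv := hadj.ne
      have hab : idx v ≠ idx u := fun hd => huv ((hidx v u hij.symm hd).symm)
      obtain ⟨hchord, h1, h2⟩ := pgon_chord_nat hw hab
      have hdiff : fC u - fC v = ((ε:ℂ)*ω) * (pgon w (idx u) - pgon w (idx v)) := by
        simp only [hfC_def]
        rw [hFdiff, hij, sub_self, zero_add]
      set d0 := (((idx u : Fin w) : ℤ) - ((idx v : Fin w) : ℤ)).natAbs with hd0
      have hkey : dist (f u) (f v)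
          = ε * (2 * Real.sin (π * (((if d0 ≤ w/2 then d0 else w - d0 : ℕ)) : ℝ) / w)) := by
        rw [hdist, hdiff, habsz ε (le_of_lt hε0'), hchord]
        by_cases hle : d0 ≤ w / 2
        · rw [if_pos hle]
        · rw [if_neg hle]
          have hdw : d0 ≤ w := by omega
          have hc1 : ((w - d0 : ℕ) : ℝ) = (w : ℝ) - (d0 : ℝ) := by
            push_cast [Nat.cast_sub hdw]
            ring
          have hwne : (w:ℝ) ≠ 0 := by positivity
          have heq2 : π * ((w - d0 : ℕ) : ℝ) / w = π - π * (d0:ℝ) / w := by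
            rw [hc1]
            field_simp
          rw [heq2, Real.sin_pi_sub]
      refine Set.mem_union_right _ ⟨(if d0 ≤ w/2 then d0 else w - d0), ?_, hkey.symm⟩
      simp only [Finset.coe_Icc, Set.mem_Icc]
      split_ifs <;> omega
    · -- inter-part edge
      have hHij : H.Adj (P u) (P v) := hGH u v hadj hij
      have hdiff : fC u - fC v
          = -((gc (P v) - gc (P u)) + ((ε:ℂ)*ω) * (pgon w (idx v) - pgon w (idx u))) := by
        simp only [hfC_def]
        rw [hFdiff]
        ring
      by_cases hab : idx u = idx v
      · have hkey : dist (g (P v)) (g (P u)) = dist (f u) (f v) := by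
          rw [hgcdist, hdist, hdiff, hab, sub_self, mul_zero, add_zero, norm_neg]
        exact Set.mem_union_left _ (Set.mem_union_right _ ⟨P v, P u, hHij.symm, hkey⟩)
      · have htT : (gc (P v) - gc (P u)) ∈ T := ⟨P u, P v, hHij, rfl⟩
        have hex : ∃ a ∈ T, h a = h (gc (P v) - gc (P u)) := ⟨_, htT, rfl⟩
        have ht'mem : Function.invFunOn h T (h (gc (P v) - gc (P u))) ∈ T' :=
          ⟨h (gc (P v) - gc (P u)), ⟨_, htT, rfl⟩, rfl⟩
        have hht' := Function.invFunOn_eq hex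
        set t' := Function.invFunOn h T (h (gc (P v) - gc (P u))) with ht'_def
        have htne : (gc (P v) - gc (P u)) ≠ 0 :=
          sub_ne_zero.mpr fun hc => hij ((hgcinj hc).symm)
        have hpm : t' = (gc (P v) - gc (P u)) ∨ t' = -(gc (P v) - gc (P u)) := by
          have e1 : Submodule.span ℝ {(EE t' : Plane)}
              = Submodule.span ℝ {(EE (gc (P v) - gc (P u)) : Plane)} :=
            congrArg Prod.fst hht'
          have e2 : ‖t'‖ = ‖gc (P v) - gc (P u)‖ := congrArg Prod.snd hht'
          exact span_norm_pm htne e1 e2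
        have hvalue : norm (fC u - fC v)
            = norm ((gc (P v) - gc (P u))
              + ((ε:ℂ)*ω) * (pgon w (idx v) - pgon w (idx u))) := by
          rw [hdiff, norm_neg]
        rcases hpm with hpm | hpm
        · refine Set.mem_union_left _ (Set.mem_union_left _
            ⟨(t', (idx u, idx v)), ⟨ht'mem, hab⟩, ?_⟩)
          simp only [hval_def]
          rw [hpm, hdist, hvalue]
        · refine Set.mem_union_left _ (Set.mem_union_left _
            ⟨(t', (idx v, idx u)), ⟨ht'mem, fun hc => hab hc.symm⟩, ?_⟩)
          simp only [hval_def]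
          rw [hpm, hdist, hvalue,
            show -(gc (P v) - gc (P u)) + ((ε:ℂ)*ω) * (pgon w (idx u) - pgon w (idx v))
            = -((gc (P v) - gc (P u)) + ((ε:ℂ)*ω) * (pgon w (idx v) - pgon w (idx u))) by ring,
            norm_neg]
  -- cardinalities
  have hcard1 : (G.edgeLengths f).ncard
      ≤ A'.ncard + (H.edgeLengths g).ncard + C'.ncard := by
    calc (G.edgeLengths f).ncard ≤ ((A' ∪ H.edgeLengths g) ∪ C').ncard :=
        Set.ncard_le_ncard hsub ((hA'fin.union hBfin).union hC'fin)
      _ ≤ (A' ∪ H.edgeLengths g).ncard + C'.ncard := Set.ncard_union_le _ _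
      _ ≤ A'.ncard + (H.edgeLengths g).ncard + C'.ncard := by
          have := Set.ncard_union_le A' (H.edgeLengths g)
          omega
  have hSfin : (H.edgeSlopes g).Finite := by
    apply Set.Finite.subset
      (Set.finite_range (fun q : W × W => Submodule.span ℝ {g q.2 - g q.1}))
    rintro L ⟨i, j, _, hL⟩
    exact ⟨(i, j), hL.symm⟩
  have hSL : (h '' T) ⊆ (H.edgeSlopes g) ×ˢ (H.edgeLengths g) := by
    rintro y ⟨t, ⟨i, j, hadj', rfl⟩, rfl⟩
    constructor
    · refine ⟨i, j, hadj', ?_⟩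
      simp only [hh_def]
      congr 1
      rw [map_sub, hEEgc, hEEgc]
    · refine ⟨j, i, hadj'.symm, ?_⟩
      rw [hgcdist]
  have hT'card : T'.ncard ≤ s * ℓ := by
    calc T'.ncard ≤ (h '' T).ncard := Set.ncard_image_le (hTfin.image h)
      _ ≤ ((H.edgeSlopes g) ×ˢ (H.edgeLengths g)).ncard :=
          Set.ncard_le_ncard hSL (hSfin.prod hBfin)
      _ = (H.edgeSlopes g).ncard * (H.edgeLengths g).ncard := ncard_prod _ _
      _ ≤ s * ℓ := Nat.mul_le_mul hslope hlen
  have hODcard : OD.ncard = w * w - w := by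
    have hOD : OD = ↑((Finset.univ : Finset (Fin w)).offDiag) := by
      ext q
      simp [hOD_def, Finset.mem_offDiag]
    rw [hOD, Set.ncard_coe_finset, Finset.offDiag_card, Finset.card_univ, Fintype.card_fin]
  have hA'card : A'.ncard ≤ s * ℓ * (w * w - w) := by
    calc A'.ncard ≤ (T' ×ˢ OD).ncard := Set.ncard_image_le (hT'fin.prod hODfin)
      _ = T'.ncard * OD.ncard := ncard_prod _ _
      _ ≤ (s * ℓ) * (w * w - w) := by
          rw [hODcard]
          exact Nat.mul_le_mul_right _ hT'card
  have hC'card : C'.ncard ≤ w / 2 := by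
    calc C'.ncard ≤ ((Finset.Icc 1 (w/2) : Finset ℕ) : Set ℕ).ncard :=
        Set.ncard_image_le ((Finset.Icc 1 (w/2)).finite_toSet)
      _ = w / 2 := by
          rw [Set.ncard_coe_finset, Nat.card_Icc]
          omega
  have hww : w * w - w = w * (w - 1) := by
    cases w with
    | zero => simp
    | succ n =>
        rw [Nat.succ_sub_one, Nat.mul_succ, Nat.add_sub_cancel]
  calc (G.edgeLengths f).ncard ≤ A'.ncard + (H.edgeLengths g).ncard + C'.ncard := hcard1
    _ ≤ s * ℓ * (w * w - w) + ℓ + w / 2 := by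
        have := hC'card
        have := hA'card
        omega
    _ = s * ℓ * w * (w - 1) + w / 2 + ℓ := by
        rw [hww, ← mul_assoc]
        omega
end
end

section
/- Let G be a graph admitting a P-partition of width k ≥ 1 for some path P. Then the distance-number of G satisfies dn(G) ≤ k·(k − 1/2) + 1. -/
noncomputable section

/- ### Auxiliary machinery -/

/-- A point on the unit circle at angle `a`. -/
def ptOnCircle (a : ℝ) : Plane :=
  (WithLp.equiv 2 (Fin 2 → ℝ)).symm ![Real.cos a, Real.sin a]

lemma ptOnCircle_norm (a : ℝ) : ‖ptOnCircle a‖ = 1 := by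
  have : ‖ptOnCircle a‖ = Real.sqrt (Real.cos a ^ 2 + Real.sin a ^ 2) := by
    rw [EuclideanSpace.norm_eq, Fin.sum_univ_two]
    simp [ptOnCircle, WithLp.equiv_symm_apply, Real.norm_eq_abs, sq_abs]
  rw [this, Real.cos_sq_add_sin_sq, Real.sqrt_one]

lemma ptOnCircle_dist (a b : ℝ) :
    dist (ptOnCircle a) (ptOnCircle b) = Real.sqrt (2 - 2 * Real.cos (a - b)) := by
  rw [EuclideanSpace.dist_eq, Fin.sum_univ_two]
  congr 1
  simp only [ptOnCircle, WithLp.equiv_symm_apply, Matrix.cons_val_zero, Matrix.cons_val_one,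
    Matrix.head_cons, Real.dist_eq, sq_abs]
  rw [Real.cos_sub]
  linear_combination Real.cos_sq_add_sin_sq a + Real.cos_sq_add_sin_sq b

lemma ptOnCircle_inj {a b : ℝ} (h : ptOnCircle a = ptOnCircle b) : Real.cos (a - b) = 1 := by
  have h' : ![Real.cos a, Real.sin a] = ![Real.cos b, Real.sin b] :=
    (WithLp.equiv 2 (Fin 2 → ℝ)).symm.injective h
  have hc : Real.cos a = Real.cos b := by
    have := congrFun h' 0; simpa using this
  have hs : Real.sin a = Real.sin b := by
    have := congrFun h' 1; simpa using this
  rw [Real.cos_sub, hc, hs]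
  linear_combination Real.cos_sq_add_sin_sq b

lemma notMemOpenSegment {x y z : Plane} (hx : ‖x‖ = 1) (hy : ‖y‖ = 1) (hz : ‖z‖ = 1)
    (hxy : x ≠ y) : z ∉ openSegment ℝ x y := by
  intro hmem
  obtain ⟨a, b, ha, hb, hab, hz'⟩ := hmem
  have hlt : ‖a • x + b • y‖ < 1 := norm_combo_lt_of_ne hx.le hy.le hxy ha hb hab
  rw [hz', hz] at hlt
  exact lt_irrefl _ hlt

lemma keyDiv {k a b c d : ℕ} (hc : c < k) (hd : d < k) (h : k * a + c = k * b + d) :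
    a = b ∧ c = d := by
  rcases Nat.lt_trichotomy a b with hab | hab | hab
  · exfalso
    have : k * a + c < k * b + d := by
      calc k * a + c < k * a + k := by omega
        _ = k * (a + 1) := by ring
        _ ≤ k * b := Nat.mul_le_mul_left k hab
        _ ≤ k * b + d := Nat.le_add_right _ _
    omega
  · constructor
    · exact hab
    · subst hab; omega
  · exfalso
    have : k * b + d < k * a + c := by
      calc k * b + d < k * b + k := by omega
        _ = k * (b + 1) := by ring
        _ ≤ k * a := Nat.mul_le_mul_left k hab
        _ ≤ k * a + c := Nat.le_add_right _ _
    omega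

/-- If `G` admits a `P`-partition of width `k ≥ 1` for some path `P`,
then `dn G ≤ k·(k − 1/2) + 1`. -/
theorem stmt16 {V : Type*} [Fintype V] (G : SimpleGraph V) (k t : ℕ) (hk : 1 ≤ k)
    (P : V → Fin t) (hPsurj : Function.Surjective P)
    (hH : ∀ i j : Fin t, i ≠ j →
      ((SimpleGraph.pathGraph t).Adj i j ↔ ∃ u v : V, G.Adj u v ∧ P u = i ∧ P v = j))
    (hwidth : ∀ i : Fin t, (P ⁻¹' {i}).ncard ≤ k) :
    (G.dn : ℝ) ≤ (k : ℝ) * ((k : ℝ) - 1 / 2) + 1 := by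
  classical
  letI : LinearOrder V := LinearOrder.lift' (Fintype.equivFin V) (Fintype.equivFin V).injective
  -- the rank of a vertex within its part
  set j : V → ℕ := fun v => (Finset.univ.filter (fun u => P u = P v ∧ u < v)).card with hjdef
  have hwidth' : ∀ v : V, (Finset.univ.filter (fun u => P u = P v)).card ≤ k := by
    intro v
    have h := hwidth (P v)
    have hset : P ⁻¹' {P v} = ↑(Finset.univ.filter (fun u => P u = P v)) := by
      ext a; simp
    rwa [hset, Set.ncard_coe_finset] at h
  have hjlt : ∀ v : V, j v < k := by
    intro v
    have hv : v ∉ Finset.univ.filter (fun u => P u = P v ∧ u < v) := by simp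
    have hsub : insert v (Finset.univ.filter (fun u => P u = P v ∧ u < v)) ⊆
        Finset.univ.filter (fun u => P u = P v) := by
      intro a ha
      rcases Finset.mem_insert.mp ha with rfl | ha
      · simp
      · simp only [Finset.mem_filter, Finset.mem_univ, true_and] at ha ⊢
        exact ha.1
    have : j v + 1 ≤ k := by
      calc j v + 1 = (insert v (Finset.univ.filter (fun u => P u = P v ∧ u < v))).card := by
            rw [Finset.card_insert_of_notMem hv]
        _ ≤ (Finset.univ.filter (fun u => P u = P v)).card := Finset.card_le_card hsub
        _ ≤ k := hwidth' v
    omega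
  have hjmono : ∀ u v : V, P u = P v → u < v → j u < j v := by
    intro u v hP huv
    have hu : u ∉ Finset.univ.filter (fun w => P w = P u ∧ w < u) := by simp
    have hsub : insert u (Finset.univ.filter (fun w => P w = P u ∧ w < u)) ⊆
        Finset.univ.filter (fun w => P w = P v ∧ w < v) := by
      intro a ha
      rcases Finset.mem_insert.mp ha with rfl | ha
      · simp only [Finset.mem_filter, Finset.mem_univ, true_and]
        exact ⟨hP, huv⟩
      · simp only [Finset.mem_filter, Finset.mem_univ, true_and] at ha ⊢
        exact ⟨ha.1.trans hP, ha.2.trans huv⟩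
    have : j u + 1 ≤ j v := by
      calc j u + 1 = (insert u (Finset.univ.filter (fun w => P w = P u ∧ w < u))).card := by
            rw [Finset.card_insert_of_notMem hu]
        _ ≤ (Finset.univ.filter (fun w => P w = P v ∧ w < v)).card := Finset.card_le_card hsub
        _ = j v := rfl
    omega
  have hjinj : ∀ u v : V, P u = P v → j u = j v → u = v := by
    intro u v hP hj
    rcases lt_trichotomy u v with h | h | h
    · exact absurd hj (Nat.ne_of_lt (hjmono u v hP h))
    · exact h
    · exact absurd hj.symm (Nat.ne_of_lt (hjmono v u hP.symm h))
  -- the global index of a vertex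
  set m : V → ℕ := fun v => k * (P v).val + j v with hmdef
  have hminj : ∀ u v : V, m u = m v → u = v := by
    intro u v h
    obtain ⟨h1, h2⟩ := keyDiv (hjlt u) (hjlt v) h
    exact hjinj u v (Fin.val_injective h1) h2
  -- the drawing
  set θ : ℝ := Real.pi * Real.sqrt 2 with hθdef
  set f : V → Plane := fun v => ptOnCircle (θ * m v) with hfdef
  have hinj : Function.Injective f := by
    intro u v h
    have hcos : Real.cos (θ * m u - θ * m v) = 1 := ptOnCircle_inj h
    rw [Real.cos_eq_one_iff] at hcos
    obtain ⟨n, hn⟩ := hcos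
    by_contra hne
    have hmne : m u ≠ m v := fun hmm => hne (hminj u v hmm)
    have hz : (m u : ℤ) - m v ≠ 0 := by omega
    have h2 : Real.pi * ((2 : ℝ) * n) = Real.pi * (Real.sqrt 2 * ((m u : ℝ) - m v)) := by
      rw [hθdef] at hn
      linear_combination hn
    have h3 : (2 : ℝ) * n = Real.sqrt 2 * ((m u : ℝ) - m v) :=
      mul_left_cancel₀ Real.pi_ne_zero h2
    have h4 : Real.sqrt 2 * (((m u : ℤ) - m v : ℤ) : ℝ) = ((2 * n : ℤ) : ℝ) := by
      push_cast
      linarith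
    exact (irrational_sqrt_two.mul_intCast hz).ne_int (2 * n) h4
  have hnormf : ∀ v : V, ‖f v‖ = 1 := fun v => ptOnCircle_norm _
  have hdraw : ∀ u v w : V, G.Adj u v → f w ∉ openSegment ℝ (f u) (f v) := by
    intro u v w huv
    exact notMemOpenSegment (hnormf u) (hnormf v) (hnormf w)
      (fun h => huv.ne (hinj h))
  -- the edge lengths
  set D : ℕ → ℝ := fun d => Real.sqrt (2 - 2 * Real.cos (θ * d)) with hDdef
  have hsub : G.edgeLengths f ⊆ ↑((Finset.Icc 1 (2 * k - 1)).image D) := by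
    rintro l ⟨u, v, huv, rfl⟩
    -- difference of indices
    have hmne : m u ≠ m v := fun hmm => huv.ne (hminj u v hmm)
    have hbound : 1 ≤ ((m u : ℤ) - m v).natAbs ∧ ((m u : ℤ) - m v).natAbs ≤ 2 * k - 1 := by
      have hju := hjlt u
      have hjv := hjlt v
      by_cases hP : P u = P v
      · have e : (m u : ℤ) - m v = (j u : ℤ) - j v := by
          simp only [hmdef, hP]
          push_cast
          ring
        omega
      · have hadj : (SimpleGraph.pathGraph t).Adj (P u) (P v) :=
          (hH (P u) (P v) hP).mpr ⟨u, v, huv, rfl, rfl⟩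
        rw [SimpleGraph.pathGraph_adj] at hadj
        rcases hadj with h1 | h1
        · have e : (m u : ℤ) - m v = (j u : ℤ) - j v - k := by
            have hv' : ((P v).val : ℤ) = (P u).val + 1 := by exact_mod_cast h1.symm
            simp only [hmdef]
            push_cast
            rw [hv']
            ring
          omega
        · have e : (m u : ℤ) - m v = (j u : ℤ) - j v + k := by
            have hu' : ((P u).val : ℤ) = (P v).val + 1 := by exact_mod_cast h1.symm
            simp only [hmdef]
            push_cast
            rw [hu']
            ring
          omega
    have hdist : dist (f u) (f v) = D ((m u : ℤ) - m v).natAbs := by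
      have hcast : ((((m u : ℤ) - m v).natAbs : ℕ) : ℝ) = |(m u : ℝ) - (m v : ℝ)| := by
        rw [Nat.cast_natAbs, Int.cast_abs]
        push_cast
        ring_nf
      show dist (ptOnCircle (θ * m u)) (ptOnCircle (θ * m v)) =
        Real.sqrt (2 - 2 * Real.cos (θ * (((m u : ℤ) - m v).natAbs : ℝ)))
      rw [ptOnCircle_dist, hcast]
      rcases abs_cases ((m u : ℝ) - (m v : ℝ)) with ⟨h, _⟩ | ⟨h, _⟩
      · rw [h, show θ * ((m u : ℝ) - (m v : ℝ)) = θ * (m u : ℝ) - θ * (m v : ℝ) by ring]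
      · rw [h, show θ * -((m u : ℝ) - (m v : ℝ)) = -(θ * (m u : ℝ) - θ * (m v : ℝ)) by ring,
          Real.cos_neg]
    rw [hdist]
    exact Finset.mem_coe.mpr (Finset.mem_image.mpr
      ⟨((m u : ℤ) - m v).natAbs, Finset.mem_Icc.mpr ⟨hbound.1, hbound.2⟩, rfl⟩)
  have hcard : (G.edgeLengths f).ncard ≤ 2 * k - 1 := by
    calc (G.edgeLengths f).ncard ≤ (↑((Finset.Icc 1 (2 * k - 1)).image D) : Set ℝ).ncard :=
          Set.ncard_le_ncard hsub (Finset.finite_toSet _)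
      _ = ((Finset.Icc 1 (2 * k - 1)).image D).card := Set.ncard_coe_finset _
      _ ≤ (Finset.Icc 1 (2 * k - 1)).card := Finset.card_image_le
      _ = 2 * k - 1 + 1 - 1 := Nat.card_Icc 1 (2 * k - 1)
      _ = 2 * k - 1 := by omega
  have hdn : G.dn ≤ (G.edgeLengths f).ncard :=
    Nat.sInf_le ⟨f, ⟨hinj, hdraw⟩, rfl⟩
  have hdn' : G.dn ≤ 2 * k - 1 := hdn.trans hcard
  have h5 : (G.dn : ℝ) ≤ ((2 * k - 1 : ℕ) : ℝ) := Nat.cast_le.mpr hdn'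
  have h6 : ((2 * k - 1 : ℕ) : ℝ) = 2 * (k : ℝ) - 1 := by
    have h1k : (1 : ℕ) ≤ 2 * k := by omega
    rw [Nat.cast_sub h1k]
    push_cast
    ring
  rw [h6] at h5
  nlinarith [sq_nonneg ((k : ℝ) - 5 / 4)]
end
end

section
/- For every graph G, the distance-number satisfies dn(G) ≤ cbw(G) ≤ bw(G), where bw(G) is the bandwidth of G and cbw(G) is the cyclic bandwidth of G. -/
noncomputable section

/-- The bandwidth of `G`: the minimum over all vertex orderings `σ` of
`max {|σ(v) − σ(w)| : vw ∈ E(G)}` (taken to be `0` for an edgeless graph). -/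
def bandwidth {V : Type*} [Fintype V] (G : SimpleGraph V) : ℕ :=
  sInf {k : ℕ | ∃ σ : V ≃ Fin (Fintype.card V),
    ∀ u v : V, G.Adj u v → (((σ u : ℕ) : ℤ) - ((σ v : ℕ) : ℤ)).natAbs ≤ k}

/-- The cyclic bandwidth of `G`: the minimum over all vertex orderings `σ` of
`max {min {|σ(v) − σ(w)|, n − |σ(v) − σ(w)|} : vw ∈ E(G)}`. -/
def cyclicBandwidth {V : Type*} [Fintype V] (G : SimpleGraph V) : ℕ :=
  sInf {k : ℕ | ∃ σ : V ≃ Fin (Fintype.card V),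
    ∀ u v : V, G.Adj u v →
      min (((σ u : ℕ) : ℤ) - ((σ v : ℕ) : ℤ)).natAbs
        (Fintype.card V - (((σ u : ℕ) : ℤ) - ((σ v : ℕ) : ℤ)).natAbs) ≤ k}


open Real

def pt (t : ℝ) : EuclideanSpace ℝ (Fin 2) := (WithLp.equiv 2 (Fin 2 → ℝ)).symm ![Real.cos t, Real.sin t]

lemma pt_norm (t : ℝ) : ‖pt t‖ = 1 := by
  rw [EuclideanSpace.norm_eq, Fin.sum_univ_two]
  simp [pt, sq_abs, Real.cos_sq_add_sin_sq]

lemma pt_dist (a b : ℝ) : dist (pt a) (pt b) = Real.sqrt (2 - 2 * Real.cos (a - b)) := by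
  rw [EuclideanSpace.dist_eq, Fin.sum_univ_two]
  congr 1
  simp [pt, Real.dist_eq, sq_abs]
  rw [Real.cos_sub]
  nlinarith [Real.sin_sq_add_cos_sq a, Real.sin_sq_add_cos_sq b]

lemma key_main {V : Type*} [Fintype V] (G : SimpleGraph V) (k : ℕ)
    (σ : V ≃ Fin (Fintype.card V))
    (hσ : ∀ u v : V, G.Adj u v →
      min (((σ u : ℕ) : ℤ) - ((σ v : ℕ) : ℤ)).natAbs
        (Fintype.card V - (((σ u : ℕ) : ℤ) - ((σ v : ℕ) : ℤ)).natAbs) ≤ k) :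
    G.dn ≤ k := by
  classical
  set θ : V → ℝ := fun v => 2 * π * (σ v : ℕ) / (Fintype.card V) with hθ
  set f : V → EuclideanSpace ℝ (Fin 2) := fun v => pt (θ v) with hf
  -- basic angle bounds
  have hθmem : ∀ v : V, 0 ≤ θ v ∧ θ v < 2 * π := by
    intro v
    have hnpos : (0 : ℝ) < (Fintype.card V) := by
      exact_mod_cast Fintype.card_pos_iff.mpr ⟨v⟩
    have h1 : (0:ℝ) ≤ (σ v : ℕ) := by positivity
    have h2 : ((σ v : ℕ) : ℝ) < (Fintype.card V) := by exact_mod_cast (σ v).2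
    constructor
    · apply div_nonneg _ (le_of_lt hnpos)
      positivity
    · rw [div_lt_iff₀ hnpos]
      have : (0:ℝ) < 2 * π := by positivity
      nlinarith
  -- injectivity
  have hinj : Function.Injective f := by
    intro u v huv
    have hd : dist (f u) (f v) = 0 := by rw [huv, dist_self]
    rw [hf] at hd
    simp only [pt_dist] at hd
    have hcos : Real.cos (θ u - θ v) = 1 := by
      have h1 : Real.cos (θ u - θ v) ≤ 1 := Real.cos_le_one _
      have h2 : (2 : ℝ) - 2 * Real.cos (θ u - θ v) = 0 := by
        by_contra h
        have : (0:ℝ) < 2 - 2 * Real.cos (θ u - θ v) := by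
          rcases lt_or_eq_of_le (by linarith : (0:ℝ) ≤ 2 - 2 * Real.cos (θ u - θ v)) with h'|h'
          · exact h'
          · exact absurd h'.symm h
        have := Real.sqrt_pos.mpr this
        linarith [hd ▸ this]
      linarith
    have hb1 := hθmem u
    have hb2 := hθmem v
    have : θ u - θ v = 0 := by
      rw [Real.cos_eq_one_iff_of_lt_of_lt (by linarith) (by linarith)] at hcos
      exact hcos
    have hθeq : θ u = θ v := by linarith
    have hnpos : (0 : ℝ) < (Fintype.card V) := by
      exact_mod_cast Fintype.card_pos_iff.mpr ⟨v⟩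
    have hpi : (0:ℝ) < 2 * π := by positivity
    have hfrac : (0:ℝ) < 2 * π / (Fintype.card V) := by positivity
    simp only [hθ] at hθeq
    have hx : (2 * π / ((Fintype.card V):ℝ)) * ((σ u : ℕ) : ℝ) = (2 * π / ((Fintype.card V):ℝ)) * ((σ v : ℕ) : ℝ) := by
      linear_combination hθeq
    have : ((σ u : ℕ) : ℝ) = ((σ v : ℕ) : ℝ) := mul_left_cancel₀ hfrac.ne' hx
    have : (σ u : ℕ) = (σ v : ℕ) := by exact_mod_cast this
    exact σ.injective (Fin.ext this)
  -- no vertex on an open segment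
  have hseg : ∀ u v w : V, G.Adj u v → f w ∉ openSegment ℝ (f u) (f v) := by
    intro u v w hadj hmem
    have hne : f u ≠ f v := fun h => hadj.ne (hinj h)
    obtain ⟨a, b, ha, hb, hab, hsum⟩ := hmem
    have hlt : ‖a • f u + b • f v‖ < 1 :=
      norm_combo_lt_of_ne (by rw [hf]; exact le_of_eq (pt_norm _))
        (by rw [hf]; exact le_of_eq (pt_norm _)) hne ha hb hab
    rw [hsum] at hlt
    rw [hf] at hlt
    simp [pt_norm] at hlt
  -- edge lengths
  have hsub : G.edgeLengths f ⊆
      (fun m : ℕ => Real.sqrt (2 - 2 * Real.cos (2 * π * m / (Fintype.card V)))) '' Set.Icc 1 k := by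
    rintro d ⟨u, v, hadj, rfl⟩
    have hnpos : 0 < (Fintype.card V) := Fintype.card_pos_iff.mpr ⟨v⟩
    set i : ℕ := (σ u : ℕ) with hi
    set j : ℕ := (σ v : ℕ) with hj
    set a : ℕ := ((i : ℤ) - (j : ℤ)).natAbs with haa
    have hij : i ≠ j := fun h => hadj.ne (σ.injective (Fin.ext h))
    have ha1 : 1 ≤ a := by
      rw [haa]
      omega
    have haltn : a < (Fintype.card V) := by
      have h1 : i < (Fintype.card V) := (σ u).2
      have h2 : j < (Fintype.card V) := (σ v).2
      omega
    refine ⟨min a ((Fintype.card V) - a), ⟨?_, ?_⟩, ?_⟩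
    · omega
    · exact hσ u v hadj
    · simp only [hf]
      rw [pt_dist]
      congr 2
      -- cos (θ u - θ v) = cos (2π * min a ((Fintype.card V)-a) / (Fintype.card V))
      have hsubθ : θ u - θ v = 2 * π * ((i:ℝ) - j) / (Fintype.card V) := by
        rw [hθ]; ring
      have hcos_a : Real.cos (θ u - θ v) = Real.cos (2 * π * a / (Fintype.card V)) := by
        rw [hsubθ]
        rcases le_or_gt (j:ℤ) (i:ℤ) with h | h
        · have : ((a : ℤ) : ℝ) = (i:ℝ) - j := by
            rw [haa, Int.natAbs_of_nonneg (by omega)]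
            push_cast; ring
          rw [show ((i:ℝ) - j) = ((a : ℤ) : ℝ) from this.symm]
          norm_num
        · have : ((a : ℤ) : ℝ) = (j:ℝ) - i := by
            rw [haa, show (i:ℤ) - (j:ℤ) = -((j:ℤ) - i) by ring, Int.natAbs_neg,
              Int.natAbs_of_nonneg (by omega)]
            push_cast; ring
          rw [show 2 * π * ((i:ℝ) - j) / (Fintype.card V) = -(2 * π * ((j:ℝ) - i) / (Fintype.card V)) by ring, Real.cos_neg,
            show ((j:ℝ) - i) = ((a : ℤ) : ℝ) from this.symm]
          norm_num
      rcases le_total a ((Fintype.card V) - a) with hmin | hmin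
      · rw [min_eq_left hmin, hcos_a]
      · rw [min_eq_right hmin, hcos_a]
        have hnR : (0:ℝ) < (Fintype.card V) := by exact_mod_cast hnpos
        have hcast : (((Fintype.card V) - a : ℕ) : ℝ) = ((Fintype.card V):ℝ) - a := by
          push_cast [Nat.cast_sub (le_of_lt haltn)]; ring
        rw [hcast, show 2 * π * (((Fintype.card V):ℝ) - a) / (Fintype.card V) = 2 * π - 2 * π * a / (Fintype.card V) by
          field_simp, Real.cos_two_pi_sub]
  -- count
  have hfin : ((fun m : ℕ => Real.sqrt (2 - 2 * Real.cos (2 * π * m / (Fintype.card V)))) ''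
      Set.Icc 1 k).Finite := (Set.finite_Icc 1 k).image _
  have hcard : (G.edgeLengths f).ncard ≤ k := by
    calc (G.edgeLengths f).ncard ≤ ((fun m : ℕ => Real.sqrt (2 - 2 * Real.cos (2 * π * m / (Fintype.card V)))) ''
        Set.Icc 1 k).ncard := Set.ncard_le_ncard hsub hfin
      _ ≤ (Set.Icc 1 k).ncard := Set.ncard_image_le (Set.finite_Icc 1 k)
      _ = k := by rw [← Finset.coe_Icc, Set.ncard_coe_finset, Nat.card_Icc]; omega
  calc G.dn ≤ (G.edgeLengths f).ncard := Nat.sInf_le ⟨f, ⟨hinj, hseg⟩, rfl⟩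
    _ ≤ k := hcard

/-- For every graph `G`, `dn G ≤ cbw G ≤ bw G`. -/
theorem stmt17 {V : Type*} [Fintype V] (G : SimpleGraph V) :
    G.dn ≤ cyclicBandwidth G ∧ cyclicBandwidth G ≤ bandwidth G := by
  classical
  have hbw_ne : {k : ℕ | ∃ σ : V ≃ Fin (Fintype.card V),
      ∀ u v : V, G.Adj u v → (((σ u : ℕ) : ℤ) - ((σ v : ℕ) : ℤ)).natAbs ≤ k}.Nonempty := by
    refine ⟨Fintype.card V, Fintype.equivFin V, fun u v _ => ?_⟩
    have h1 : ((Fintype.equivFin V) u : ℕ) < Fintype.card V := ((Fintype.equivFin V) u).2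
    have h2 : ((Fintype.equivFin V) v : ℕ) < Fintype.card V := ((Fintype.equivFin V) v).2
    omega
  have hcbw_ne : {k : ℕ | ∃ σ : V ≃ Fin (Fintype.card V),
      ∀ u v : V, G.Adj u v →
        min (((σ u : ℕ) : ℤ) - ((σ v : ℕ) : ℤ)).natAbs
          (Fintype.card V - (((σ u : ℕ) : ℤ) - ((σ v : ℕ) : ℤ)).natAbs) ≤ k}.Nonempty := by
    refine ⟨Fintype.card V, Fintype.equivFin V, fun u v _ => ?_⟩
    exact le_trans (min_le_right _ _) (Nat.sub_le _ _)
  constructor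
  · obtain ⟨σ, hσ⟩ := Nat.sInf_mem hcbw_ne
    exact key_main G _ σ hσ
  · obtain ⟨σ, hσ⟩ := Nat.sInf_mem hbw_ne
    exact Nat.sInf_le ⟨σ, fun u v h => le_trans (min_le_left _ _) (hσ u v h)⟩
end
end

section
/- For all graphs G and H, each having at least one edge, the distance-numbers of the cartesian product G □ H satisfy max{ddn(G), ddn(H)} ≤ ddn(G □ H) ≤ ddn(G) + ddn(H) − 1 and max{dn(G), dn(H)} ≤ dn(G □ H) ≤ dn(G) + dn(H) − 1. -/
noncomputable section

namespace Stmt18Aux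

open Complex Polynomial

/-- A fixed linear isometry between `ℂ` and the plane. -/
def planeEquiv : ℂ ≃ₗᵢ[ℝ] Plane := Complex.orthonormalBasisOneI.repr

lemma planeEquiv_seg (a b x : ℂ) :
    planeEquiv x ∈ openSegment ℝ (planeEquiv a) (planeEquiv b) ↔ x ∈ openSegment ℝ a b := by
  constructor
  · rintro ⟨s, t, hs, ht, hst, h⟩
    refine ⟨s, t, hs, ht, hst, planeEquiv.injective ?_⟩
    rw [← h, map_add, map_smul, map_smul]
  · rintro ⟨s, t, hs, ht, hst, h⟩
    exact ⟨s, t, hs, ht, hst, by rw [← h, map_add, map_smul, map_smul]⟩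

lemma seg_im {x y z : ℂ} (h : x ∈ openSegment ℝ y z) :
    ((starRingEnd ℂ) (y - x) * (z - x)).im = 0 := by
  obtain ⟨s, t, hs, ht, hst, rfl⟩ := h
  obtain rfl : s = 1 - t := by linarith
  simp only [Complex.real_smul, Complex.mul_im, Complex.sub_re, Complex.sub_im,
    Complex.add_re, Complex.add_im, Complex.mul_re, Complex.conj_re, Complex.conj_im,
    Complex.ofReal_re, Complex.ofReal_im]
  ring

lemma im_identity (a b c d u : ℂ) (μ : ℝ) (hu : Complex.normSq u = 1) :
    ((starRingEnd ℂ) (a + μ * u * b) * (c + μ * u * d)).im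
      = (((starRingEnd ℂ) a * c).im + μ^2 * ((starRingEnd ℂ) b * d).im)
        + (u * (μ * ((starRingEnd ℂ) a * d - b * (starRingEnd ℂ) c))).im := by
  have h : u.re * u.re + u.im * u.im = 1 := by rwa [Complex.normSq_apply] at hu
  simp only [Complex.mul_im, Complex.mul_re, Complex.add_re, Complex.add_im,
    Complex.sub_re, Complex.sub_im, Complex.conj_re, Complex.conj_im,
    Complex.ofReal_re, Complex.ofReal_im]
  linear_combination (μ^2 * (b.re*d.im - b.im*d.re)) * h

lemma finite_line_circle (A : ℝ) (M : ℂ) (hM : M ≠ 0) :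
    {u : ℂ | ‖u‖ = 1 ∧ A + (u * M).im = 0}.Finite := by
  have hfin : {x : ℂ | IsRoot (C M * X^2 + C (2*A*I) * X - C ((starRingEnd ℂ) M)) x}.Finite := by
    apply Polynomial.finite_setOf_isRoot
    intro h
    have h2 := congrArg (fun p => Polynomial.coeff p 2) h
    simp [coeff_C, coeff_X] at h2
    exact hM h2
  apply hfin.subset
  rintro u ⟨hu, heq⟩
  have habs : ‖u‖ = 1 := by rwa []
  have husq : u * (starRingEnd ℂ) u = 1 := by
    rw [Complex.mul_conj, Complex.normSq_eq_norm_sq, habs]; norm_num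
  have him : u * M - (starRingEnd ℂ) (u * M) = (2 * (u*M).im : ℝ) * I :=
    Complex.sub_conj _
  have himA : (u*M).im = -A := by linarith
  rw [himA] at him
  have hmul := congrArg (fun z => z * u) him
  simp only [sub_mul, map_mul] at hmul
  push_cast at hmul
  have key : M * u^2 + 2*A*I*u - (starRingEnd ℂ) M = 0 := by
    linear_combination hmul + (starRingEnd ℂ) M * husq
  simp only [Set.mem_setOf_eq, IsRoot, eval_sub, eval_add, eval_mul, eval_pow, eval_C, eval_X]
  linear_combination key

lemma circle_infinite : {u : ℂ | ‖u‖ = 1}.Infinite := by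
  refine Set.infinite_of_injective_forall_mem
    (f := fun n : ℕ => (((1 - (n:ℝ)^2 : ℝ) : ℂ) + ((2*n : ℝ) : ℂ)*I)/(((1 + (n:ℝ)^2 : ℝ) : ℂ))) ?_ ?_
  · intro m n h
    have hm : ((1 + (m:ℝ)^2 : ℝ) : ℂ) ≠ 0 := by
      norm_cast; positivity
    have hn : ((1 + (n:ℝ)^2 : ℝ) : ℂ) ≠ 0 := by
      norm_cast; positivity
    rw [div_eq_div_iff hm hn] at h
    simp only [Complex.ext_iff, Complex.add_im, Complex.add_re, Complex.mul_im, Complex.mul_re,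
      Complex.ofReal_im, Complex.ofReal_re, Complex.I_im, Complex.I_re] at h
    obtain ⟨hre, him⟩ := h
    have key : 2 * ((m:ℝ) - n) * (1 - m*n) = 0 := by nlinarith [him]
    rcases mul_eq_zero.1 key with h1 | h2
    · have : (m:ℝ) = n := by
        rcases mul_eq_zero.1 h1 with h3 | h4
        · norm_num at h3
        · linarith
      exact_mod_cast this
    · have : (m:ℝ) * n = 1 := by linarith
      have : (m * n : ℕ) = 1 := by exact_mod_cast this
      rw [Nat.eq_one_of_mul_eq_one_right this, Nat.eq_one_of_mul_eq_one_left this]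
  · intro n
    simp only [Set.mem_setOf_eq, norm_div]
    have h1 : ‖((1 - (n:ℝ)^2 : ℝ) : ℂ) + ((2*n : ℝ) : ℂ)*I‖ = 1 + (n:ℝ)^2 := by
      rw [Complex.norm_def, Complex.normSq_add_mul_I,
        show ((1 - (n:ℝ)^2)^2 + (2*(n:ℝ))^2) = ((1+(n:ℝ)^2))^2 by ring]
      exact Real.sqrt_sq (by positivity)
    have h2 : ‖((1 + (n:ℝ)^2 : ℝ) : ℂ)‖ = 1 + (n:ℝ)^2 := by
      rw [Complex.norm_real]
      exact abs_of_pos (by positivity)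
    rw [h1, h2, div_self (by positivity)]

lemma seg_translate {w x y z : ℂ} :
    x + w ∈ openSegment ℝ (y + w) (z + w) ↔ x ∈ openSegment ℝ y z := by
  rw [add_comm x w, add_comm y w, add_comm z w]
  exact mem_openSegment_translate ℝ w

lemma seg_mul {m x y z : ℂ} (hm : m ≠ 0) :
    m * x ∈ openSegment ℝ (m * y) (m * z) ↔ x ∈ openSegment ℝ y z := by
  constructor
  · rintro ⟨s, t, hs, ht, hst, heq⟩
    refine ⟨s, t, hs, ht, hst, ?_⟩
    apply mul_left_cancel₀ hm
    rw [← heq]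
    simp only [Complex.real_smul]
    ring
  · rintro ⟨s, t, hs, ht, hst, heq⟩
    refine ⟨s, t, hs, ht, hst, ?_⟩
    rw [← heq]
    simp only [Complex.real_smul]
    ring

lemma conj_ne_zero {z : ℂ} (h : z ≠ 0) : (starRingEnd ℂ) z ≠ 0 := by simpa using h

lemma generic_fin (p0 p1 q0 q1 r0 r1 : ℂ) (μ : ℝ)
    (hM : (μ:ℂ) * ((starRingEnd ℂ) (p0 - r0) * (q1 - r1)
            - (p1 - r1) * (starRingEnd ℂ) (q0 - r0)) ≠ 0) :
    {u : ℂ | ‖u‖ = 1 ∧ (r0 + (μ:ℂ)*u*r1) ∈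
        openSegment ℝ (p0 + (μ:ℂ)*u*p1) (q0 + (μ:ℂ)*u*q1)}.Finite := by
  apply (finite_line_circle (((starRingEnd ℂ) (p0-r0) * (q0-r0)).im
      + μ^2 * ((starRingEnd ℂ) (p1-r1) * (q1-r1)).im) _ hM).subset
  rintro u ⟨hu, hseg⟩
  refine ⟨hu, ?_⟩
  have h0 := seg_im hseg
  have e1 : (p0 + (μ:ℂ)*u*p1) - (r0 + (μ:ℂ)*u*r1) = (p0-r0) + (μ:ℂ)*u*(p1-r1) := by ring
  have e2 : (q0 + (μ:ℂ)*u*q1) - (r0 + (μ:ℂ)*u*r1) = (q0-r0) + (μ:ℂ)*u*(q1-r1) := by ring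
  rw [e1, e2] at h0
  have hn : Complex.normSq u = 1 := by
    have : ‖u‖ = 1 := by rwa []
    rw [Complex.normSq_eq_norm_sq, this]; norm_num
  rw [im_identity _ _ _ _ u μ hn] at h0
  linarith [h0]

lemma exists_unit_inj {V W : Type*} [Fintype V] [Fintype W]
    (F : V → ℂ) (Z : W → ℂ) (hF : Function.Injective F) (hZ : Function.Injective Z)
    (μ : ℝ) (hμ : 0 < μ) :
    ∃ u : ℂ, ‖u‖ = 1 ∧
      Function.Injective (fun p : V × W => F p.1 + (μ:ℂ) * u * Z p.2) := by
  classical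
  set Bad : Set ℂ := ⋃ (p : V × W) (q : V × W),
    {u : ℂ | Z p.2 ≠ Z q.2 ∧ (μ:ℂ) * u * (Z p.2 - Z q.2) = F q.1 - F p.1} with hBad
  have hμc : (μ:ℂ) ≠ 0 := by exact_mod_cast hμ.ne'
  have hBadFin : Bad.Finite := by
    apply Set.finite_iUnion; intro p
    apply Set.finite_iUnion; intro q
    apply (Set.finite_singleton ((F q.1 - F p.1) / ((μ:ℂ) * (Z p.2 - Z q.2)))).subset
    rintro u ⟨hne, heq⟩
    have hd : Z p.2 - Z q.2 ≠ 0 := sub_ne_zero_of_ne hne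
    rw [Set.mem_singleton_iff, eq_div_iff (mul_ne_zero hμc hd)]
    linear_combination heq
  obtain ⟨u, hu⟩ := (circle_infinite.diff hBadFin).nonempty
  obtain ⟨hu1, hu2⟩ := hu
  refine ⟨u, hu1, ?_⟩
  intro p q h
  simp only at h
  by_cases hz : Z p.2 = Z q.2
  · have h1 : F p.1 = F q.1 := by rw [hz] at h; exact add_right_cancel h
    exact Prod.ext (hF h1) (hZ hz)
  · exfalso
    apply hu2
    refine Set.mem_iUnion.2 ⟨p, Set.mem_iUnion.2 ⟨q, hz, ?_⟩⟩
    linear_combination h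

lemma exists_unit_drawing {V W : Type*} [Fintype V] [Fintype W]
    (G : SimpleGraph V) (H : SimpleGraph W)
    (F : V → ℂ) (Z : W → ℂ) (hF : Function.Injective F) (hZ : Function.Injective Z)
    (hFd : ∀ a b c, G.Adj a b → F c ∉ openSegment ℝ (F a) (F b))
    (hZd : ∀ a b c, H.Adj a b → Z c ∉ openSegment ℝ (Z a) (Z b))
    (μ : ℝ) (hμ : 0 < μ) :
    ∃ u : ℂ, ‖u‖ = 1 ∧
      Function.Injective (fun p : V × W => F p.1 + (μ:ℂ) * u * Z p.2) ∧
      ∀ p q r : V × W, (G.boxProd H).Adj p q →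
        (F r.1 + (μ:ℂ) * u * Z r.2) ∉
          openSegment ℝ (F p.1 + (μ:ℂ) * u * Z p.2) (F q.1 + (μ:ℂ) * u * Z q.2) := by
  classical
  have hμc : (μ:ℂ) ≠ 0 := by exact_mod_cast hμ.ne'
  set BadInj : Set ℂ := ⋃ (p : V × W) (q : V × W),
    {u : ℂ | Z p.2 ≠ Z q.2 ∧ (μ:ℂ) * u * (Z p.2 - Z q.2) = F q.1 - F p.1} with hBadInj
  have hBadInjFin : BadInj.Finite := by
    apply Set.finite_iUnion; intro p
    apply Set.finite_iUnion; intro q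
    apply (Set.finite_singleton ((F q.1 - F p.1) / ((μ:ℂ) * (Z p.2 - Z q.2)))).subset
    rintro u ⟨hne, heq⟩
    have hd : Z p.2 - Z q.2 ≠ 0 := sub_ne_zero_of_ne hne
    rw [Set.mem_singleton_iff, eq_div_iff (mul_ne_zero hμc hd)]
    linear_combination heq
  set BadCol : Set ℂ := ⋃ (p : V × W) (q : V × W) (r : V × W),
    {u : ℂ | ‖u‖ = 1 ∧ (G.boxProd H).Adj p q ∧ (F r.1 + (μ:ℂ) * u * Z r.2) ∈
        openSegment ℝ (F p.1 + (μ:ℂ) * u * Z p.2) (F q.1 + (μ:ℂ) * u * Z q.2)} with hBadCol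
  have hBadColFin : BadCol.Finite := by
    apply Set.finite_iUnion; intro p
    apply Set.finite_iUnion; intro q
    apply Set.finite_iUnion; intro r
    by_cases hadj : (G.boxProd H).Adj p q
    · rcases hadj with ⟨hG1, hpq2⟩ | ⟨hH1, hpq1⟩
      · by_cases hr2 : Z r.2 = Z p.2
        · apply Set.finite_empty.subset
          rintro u ⟨hu, -, hseg⟩
          exfalso
          rw [hr2, ← hpq2] at hseg
          exact hFd p.1 q.1 r.1 hG1 (seg_translate.mp hseg)
        · apply (generic_fin (F p.1) (Z p.2) (F q.1) (Z q.2) (F r.1) (Z r.2) μ ?_).subset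
          · rintro u ⟨hu, -, hseg⟩; exact ⟨hu, hseg⟩
          · have hd : Z q.2 - Z r.2 ≠ 0 := by
              rw [← hpq2]; exact sub_ne_zero_of_ne (fun h => hr2 h.symm)
            have hac : F p.1 - F q.1 ≠ 0 :=
              sub_ne_zero_of_ne (fun h => (hG1.ne) (hF h))
            have key : (starRingEnd ℂ) (F p.1 - F r.1) * (Z q.2 - Z r.2)
                - (Z p.2 - Z r.2) * (starRingEnd ℂ) (F q.1 - F r.1)
                = (starRingEnd ℂ) (F p.1 - F q.1) * (Z q.2 - Z r.2) := by
              rw [hpq2]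
              simp only [map_sub]
              ring
            rw [key]
            exact mul_ne_zero hμc (mul_ne_zero (conj_ne_zero hac) hd)
      · by_cases hr1 : F r.1 = F p.1
        · apply Set.finite_empty.subset
          rintro u ⟨hu, -, hseg⟩
          exfalso
          rw [hr1, ← hpq1] at hseg
          have hu0 : u ≠ 0 := by intro h; rw [h] at hu; simp at hu
          simp only [add_comm (F p.1)] at hseg
          exact hZd p.2 q.2 r.2 hH1 ((seg_mul (mul_ne_zero hμc hu0)).mp (seg_translate.mp hseg))
        · apply (generic_fin (F p.1) (Z p.2) (F q.1) (Z q.2) (F r.1) (Z r.2) μ ?_).subset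
          · rintro u ⟨hu, -, hseg⟩; exact ⟨hu, hseg⟩
          · have ha : F p.1 - F r.1 ≠ 0 := sub_ne_zero_of_ne (fun h => hr1 h.symm)
            have hne : Z p.2 ≠ Z q.2 := fun h => hH1.ne (hZ h)
            have hd : Z q.2 - Z p.2 ≠ 0 := sub_ne_zero_of_ne (Ne.symm hne)
            have key : (starRingEnd ℂ) (F p.1 - F r.1) * (Z q.2 - Z r.2)
                - (Z p.2 - Z r.2) * (starRingEnd ℂ) (F q.1 - F r.1)
                = (starRingEnd ℂ) (F p.1 - F r.1) * (Z q.2 - Z p.2) := by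
              rw [← hpq1]
              ring
            rw [key]
            exact mul_ne_zero hμc (mul_ne_zero (conj_ne_zero ha) hd)
    · apply Set.finite_empty.subset
      rintro u ⟨-, h, -⟩
      exact hadj h
  obtain ⟨u, hu1, hu2⟩ := (circle_infinite.diff (hBadInjFin.union hBadColFin)).nonempty
  rw [Set.mem_union] at hu2
  push_neg at hu2
  obtain ⟨huI, huC⟩ := hu2
  refine ⟨u, hu1, ?_, ?_⟩
  · intro p q h
    simp only at h
    by_cases hz : Z p.2 = Z q.2
    · have h1 : F p.1 = F q.1 := by rw [hz] at h; exact add_right_cancel h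
      exact Prod.ext (hF h1) (hZ hz)
    · exfalso
      apply huI
      refine Set.mem_iUnion.2 ⟨p, Set.mem_iUnion.2 ⟨q, hz, ?_⟩⟩
      linear_combination h
  · intro p q r hadj hseg
    apply huC
    refine Set.mem_iUnion.2 ⟨p, ?_⟩
    refine Set.mem_iUnion.2 ⟨q, ?_⟩
    exact Set.mem_iUnion.2 ⟨r, hu1, hadj, hseg⟩

/-- Every finite graph has a drawing (points on a parabola). -/
lemma exists_drawing {V : Type*} [Fintype V] (G : SimpleGraph V) :
    ∃ f : V → Plane, G.IsDrawing f := by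
  classical
  set x : V → ℝ := fun v => ((Fintype.equivFin V v : ℕ) : ℝ) with hx
  have hxinj : Function.Injective x := by
    intro a b h
    simp only [hx] at h
    have : (Fintype.equivFin V a : ℕ) = (Fintype.equivFin V b : ℕ) := by exact_mod_cast h
    exact (Fintype.equivFin V).injective (Fin.val_injective this)
  set Fc : V → ℂ := fun v => ((x v : ℝ) : ℂ) + ((x v ^ 2 : ℝ) : ℂ) * Complex.I with hFc
  have hFcinj : Function.Injective Fc := by
    intro a b h
    apply hxinj
    have := congrArg Complex.re h
    simpa [hFc, Complex.add_re, Complex.mul_re, Complex.I_re, Complex.I_im,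
      Complex.ofReal_im, Complex.ofReal_re, -Complex.ofReal_pow] using this
  refine ⟨fun v => planeEquiv (Fc v), planeEquiv.injective.comp hFcinj, ?_⟩
  intro a b c hadj hmem
  rw [planeEquiv_seg] at hmem
  obtain ⟨s, t, hs, ht, hst, heq⟩ := hmem
  have hre := congrArg Complex.re heq
  have him := congrArg Complex.im heq
  simp only [hFc, Complex.real_smul, Complex.add_re, Complex.add_im, Complex.mul_re,
    Complex.mul_im, Complex.ofReal_re, Complex.ofReal_im, Complex.I_re, Complex.I_im] at hre him
  have hne : x a ≠ x b := fun h => hadj.ne (hxinj h)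
  have hsq : (0:ℝ) < (x a - x b)^2 :=
    lt_of_le_of_ne (sq_nonneg _) (Ne.symm (pow_ne_zero 2 (sub_ne_zero_of_ne hne)))
  have h1 : s * x a + t * x b = x c := by linarith [hre]
  have h2 : s * x a^2 + t * x b^2 = x c^2 := by linarith [him]
  have ht' : t = 1 - s := by linarith
  subst ht'
  have h3 : s * x a^2 + (1-s) * x b^2 = (s * x a + (1-s) * x b)^2 := by rw [h1]; exact h2
  have h4 : s * (1-s) * (x a - x b)^2 = 0 := by linear_combination h3
  exact absurd h4 (ne_of_gt (mul_pos (mul_pos hs ht) hsq))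

lemma edgeLengths_finite {V : Type*} [Fintype V] (G : SimpleGraph V) (f : V → Plane) :
    (G.edgeLengths f).Finite := by
  apply (Set.finite_univ.image (fun p : V × V => dist (f p.1) (f p.2))).subset
  rintro d ⟨u, v, _, hd⟩
  exact ⟨(u, v), trivial, hd⟩

end Stmt18Aux
open Stmt18Aux

/-- For all graphs `G` and `H` with at least one edge each,
`max {ddn G, ddn H} ≤ ddn (G □ H) ≤ ddn G + ddn H − 1` and
`max {dn G, dn H} ≤ dn (G □ H) ≤ dn G + dn H − 1`. -/
theorem stmt18 {V W : Type*} [Fintype V] [Fintype W]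
    (G : SimpleGraph V) (H : SimpleGraph W)
    (hG : G.edgeSet.Nonempty) (hH : H.edgeSet.Nonempty) :
    (max G.ddn H.ddn ≤ (G.boxProd H).ddn ∧ (G.boxProd H).ddn ≤ G.ddn + H.ddn - 1) ∧
    (max G.dn H.dn ≤ (G.boxProd H).dn ∧ (G.boxProd H).dn ≤ G.dn + H.dn - 1) := by
  classical
  obtain ⟨a1, b1, hab⟩ : ∃ a b, G.Adj a b := by
    obtain ⟨e, he⟩ := hG
    induction e using Sym2.ind with
    | _ x y => exact ⟨x, y, he⟩
  obtain ⟨a2, b2, hcd⟩ : ∃ a b, H.Adj a b := by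
    obtain ⟨e, he⟩ := hH
    induction e using Sym2.ind with
    | _ x y => exact ⟨x, y, he⟩
  -- nonemptiness of the defining sets
  have hsetG_ddn : {k : ℕ | ∃ f : V → Plane, G.IsDegenDrawing f ∧
      (G.edgeLengths f).ncard = k}.Nonempty := by
    obtain ⟨f, hf⟩ := exists_drawing G
    exact ⟨_, f, hf.1, rfl⟩
  have hsetH_ddn : {k : ℕ | ∃ f : W → Plane, H.IsDegenDrawing f ∧
      (H.edgeLengths f).ncard = k}.Nonempty := by
    obtain ⟨f, hf⟩ := exists_drawing H
    exact ⟨_, f, hf.1, rfl⟩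
  have hsetGH_ddn : {k : ℕ | ∃ f : V × W → Plane, (G.boxProd H).IsDegenDrawing f ∧
      ((G.boxProd H).edgeLengths f).ncard = k}.Nonempty := by
    obtain ⟨f, hf⟩ := exists_drawing (G.boxProd H)
    exact ⟨_, f, hf.1, rfl⟩
  have hsetG_dn : {k : ℕ | ∃ f : V → Plane, G.IsDrawing f ∧
      (G.edgeLengths f).ncard = k}.Nonempty := by
    obtain ⟨f, hf⟩ := exists_drawing G
    exact ⟨_, f, hf, rfl⟩
  have hsetH_dn : {k : ℕ | ∃ f : W → Plane, H.IsDrawing f ∧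
      (H.edgeLengths f).ncard = k}.Nonempty := by
    obtain ⟨f, hf⟩ := exists_drawing H
    exact ⟨_, f, hf, rfl⟩
  have hsetGH_dn : {k : ℕ | ∃ f : V × W → Plane, (G.boxProd H).IsDrawing f ∧
      ((G.boxProd H).edgeLengths f).ncard = k}.Nonempty := by
    obtain ⟨f, hf⟩ := exists_drawing (G.boxProd H)
    exact ⟨_, f, hf, rfl⟩
  -- lower bounds, ddn
  have lower_ddn_G : G.ddn ≤ (G.boxProd H).ddn := by
    obtain ⟨D, hD, hcard⟩ := Nat.sInf_mem hsetGH_ddn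
    have hinj : Function.Injective (fun v : V => D (v, b2)) := by
      intro x y h
      have := hD h
      exact (Prod.ext_iff.mp this).1
    calc G.ddn ≤ (G.edgeLengths (fun v => D (v, b2))).ncard := Nat.sInf_le ⟨_, hinj, rfl⟩
      _ ≤ ((G.boxProd H).edgeLengths D).ncard := by
          apply Set.ncard_le_ncard ?_ (edgeLengths_finite _ D)
          rintro d ⟨x, y, hxy, hd⟩
          exact ⟨(x, b2), (y, b2), Or.inl ⟨hxy, rfl⟩, hd⟩
      _ = (G.boxProd H).ddn := hcard
  have lower_ddn_H : H.ddn ≤ (G.boxProd H).ddn := by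
    obtain ⟨D, hD, hcard⟩ := Nat.sInf_mem hsetGH_ddn
    have hinj : Function.Injective (fun w : W => D (a1, w)) := by
      intro x y h
      have := hD h
      exact (Prod.ext_iff.mp this).2
    calc H.ddn ≤ (H.edgeLengths (fun w => D (a1, w))).ncard := Nat.sInf_le ⟨_, hinj, rfl⟩
      _ ≤ ((G.boxProd H).edgeLengths D).ncard := by
          apply Set.ncard_le_ncard ?_ (edgeLengths_finite _ D)
          rintro d ⟨x, y, hxy, hd⟩
          exact ⟨(a1, x), (a1, y), Or.inr ⟨hxy, rfl⟩, hd⟩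
      _ = (G.boxProd H).ddn := hcard
  -- lower bounds, dn
  have lower_dn_G : G.dn ≤ (G.boxProd H).dn := by
    obtain ⟨D, hD, hcard⟩ := Nat.sInf_mem hsetGH_dn
    have hinj : Function.Injective (fun v : V => D (v, b2)) := by
      intro x y h
      have := hD.1 h
      exact (Prod.ext_iff.mp this).1
    have hdraw : G.IsDrawing (fun v => D (v, b2)) :=
      ⟨hinj, fun x y z hxy => hD.2 (x, b2) (y, b2) (z, b2) (Or.inl ⟨hxy, rfl⟩)⟩
    calc G.dn ≤ (G.edgeLengths (fun v => D (v, b2))).ncard := Nat.sInf_le ⟨_, hdraw, rfl⟩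
      _ ≤ ((G.boxProd H).edgeLengths D).ncard := by
          apply Set.ncard_le_ncard ?_ (edgeLengths_finite _ D)
          rintro d ⟨x, y, hxy, hd⟩
          exact ⟨(x, b2), (y, b2), Or.inl ⟨hxy, rfl⟩, hd⟩
      _ = (G.boxProd H).dn := hcard
  have lower_dn_H : H.dn ≤ (G.boxProd H).dn := by
    obtain ⟨D, hD, hcard⟩ := Nat.sInf_mem hsetGH_dn
    have hinj : Function.Injective (fun w : W => D (a1, w)) := by
      intro x y h
      have := hD.1 h
      exact (Prod.ext_iff.mp this).2
    have hdraw : H.IsDrawing (fun w => D (a1, w)) :=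
      ⟨hinj, fun x y z hxy => hD.2 (a1, x) (a1, y) (a1, z) (Or.inr ⟨hxy, rfl⟩)⟩
    calc H.dn ≤ (H.edgeLengths (fun w => D (a1, w))).ncard := Nat.sInf_le ⟨_, hdraw, rfl⟩
      _ ≤ ((G.boxProd H).edgeLengths D).ncard := by
          apply Set.ncard_le_ncard ?_ (edgeLengths_finite _ D)
          rintro d ⟨x, y, hxy, hd⟩
          exact ⟨(a1, x), (a1, y), Or.inr ⟨hxy, rfl⟩, hd⟩
      _ = (G.boxProd H).dn := hcard
  -- upper bound, ddn
  have upper_ddn : (G.boxProd H).ddn ≤ G.ddn + H.ddn - 1 := by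
    obtain ⟨f, hf, hfcard⟩ := Nat.sInf_mem hsetG_ddn
    obtain ⟨g, hg, hgcard⟩ := Nat.sInf_mem hsetH_ddn
    set F : V → ℂ := fun v => planeEquiv.symm (f v) with hF
    set Z : W → ℂ := fun w => planeEquiv.symm (g w) with hZ
    have hFinj : Function.Injective F := planeEquiv.symm.injective.comp hf
    have hZinj : Function.Injective Z := planeEquiv.symm.injective.comp hg
    have hdF : ∀ v, planeEquiv (F v) = f v := fun v => planeEquiv.apply_symm_apply _
    have hdZ : ∀ w, planeEquiv (Z w) = g w := fun w => planeEquiv.apply_symm_apply _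
    have hdistF : ∀ x y, dist (F x) (F y) = dist (f x) (f y) := fun x y => by
      rw [← planeEquiv.dist_map, hdF, hdF]
    have hdistZ : ∀ x y, dist (Z x) (Z y) = dist (g x) (g y) := fun x y => by
      rw [← planeEquiv.dist_map, hdZ, hdZ]
    set ℓG : ℝ := dist (f a1) (f b1) with hℓG
    set ℓH : ℝ := dist (g a2) (g b2) with hℓH
    have hℓGpos : 0 < ℓG := dist_pos.2 (fun h => hab.ne (hf h))
    have hℓHpos : 0 < ℓH := dist_pos.2 (fun h => hcd.ne (hg h))
    set μ : ℝ := ℓG / ℓH with hμdef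
    have hμ : 0 < μ := div_pos hℓGpos hℓHpos
    obtain ⟨u, hu1, huinj⟩ := exists_unit_inj F Z hFinj hZinj μ hμ
    set D : V × W → Plane := fun p => planeEquiv (F p.1 + (μ:ℂ) * u * Z p.2) with hD
    have hDinj : Function.Injective D := fun p q h => huinj (planeEquiv.injective h)
    set L1 : Set ℝ := G.edgeLengths f with hL1
    set L2 : Set ℝ := (fun d => μ * d) '' (H.edgeLengths g) with hL2
    have hL1fin : L1.Finite := edgeLengths_finite G f
    have hL2fin : L2.Finite := (edgeLengths_finite H g).image _
    have hsub : (G.boxProd H).edgeLengths D ⊆ L1 ∪ L2 := by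
      rintro d ⟨p, q, hpq, hd⟩
      rcases hpq with ⟨h1, h2⟩ | ⟨h1, h2⟩
      · left
        have hc : dist (D p) (D q) = dist (f p.1) (f q.1) := by
          rw [show D p = planeEquiv (F p.1 + (μ:ℂ) * u * Z p.2) from rfl,
            show D q = planeEquiv (F q.1 + (μ:ℂ) * u * Z q.2) from rfl,
            planeEquiv.dist_map, dist_eq_norm,
            show (F p.1 + (μ:ℂ) * u * Z p.2) - (F q.1 + (μ:ℂ) * u * Z q.2)
              = F p.1 - F q.1 from by rw [h2]; ring,
            ← dist_eq_norm, hdistF]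
        exact ⟨p.1, q.1, h1, by rw [← hd, hc]⟩
      · right
        have hc : dist (D p) (D q) = μ * dist (g p.2) (g q.2) := by
          rw [show D p = planeEquiv (F p.1 + (μ:ℂ) * u * Z p.2) from rfl,
            show D q = planeEquiv (F q.1 + (μ:ℂ) * u * Z q.2) from rfl,
            planeEquiv.dist_map, dist_eq_norm,
            show (F p.1 + (μ:ℂ) * u * Z p.2) - (F q.1 + (μ:ℂ) * u * Z q.2)
              = ((μ:ℂ) * u) * (Z p.2 - Z q.2) from by rw [h2]; ring,
            norm_mul, norm_mul, hu1, Complex.norm_real, Real.norm_eq_abs, abs_of_pos hμ,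
            ← dist_eq_norm, hdistZ]
          ring
        refine ⟨dist (g p.2) (g q.2), ⟨p.2, q.2, h1, rfl⟩, ?_⟩
        show μ * dist (g p.2) (g q.2) = d
        rw [← hd, hc]
    have hmem1 : ℓG ∈ L1 := ⟨a1, b1, hab, rfl⟩
    have hmem2 : ℓG ∈ L2 := ⟨ℓH, ⟨a2, b2, hcd, rfl⟩, div_mul_cancel₀ ℓG hℓHpos.ne'⟩
    have hUeq : L1 ∪ L2 = L1 ∪ (L2 \ {ℓG}) := by
      ext d
      constructor
      · rintro (h | h)
        · exact Or.inl h
        · by_cases hdd : d = ℓG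
          · exact Or.inl (hdd ▸ hmem1)
          · exact Or.inr ⟨h, hdd⟩
      · rintro (h | ⟨h, -⟩)
        · exact Or.inl h
        · exact Or.inr h
    have c1 : (G.boxProd H).ddn ≤ ((G.boxProd H).edgeLengths D).ncard :=
      Nat.sInf_le ⟨D, hDinj, rfl⟩
    have c2 : ((G.boxProd H).edgeLengths D).ncard ≤ (L1 ∪ L2).ncard :=
      Set.ncard_le_ncard hsub (hL1fin.union hL2fin)
    have c3 : (L1 ∪ (L2 \ {ℓG})).ncard ≤ L1.ncard + (L2 \ {ℓG}).ncard :=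
      Set.ncard_union_le _ _
    have c4 : (L2 \ {ℓG}).ncard = L2.ncard - 1 :=
      Set.ncard_diff_singleton_of_mem hmem2
    have c5 : L2.ncard ≤ (H.edgeLengths g).ncard := Set.ncard_image_le (edgeLengths_finite H g)
    have c6 : 1 ≤ L2.ncard := (Set.ncard_pos hL2fin).2 ⟨ℓG, hmem2⟩
    rw [hUeq] at c2
    have hfc : L1.ncard = G.ddn := hfcard
    have hgc : (H.edgeLengths g).ncard = H.ddn := hgcard
    omega
  -- upper bound, dn
  have upper_dn : (G.boxProd H).dn ≤ G.dn + H.dn - 1 := by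
    obtain ⟨f, hf, hfcard⟩ := Nat.sInf_mem hsetG_dn
    obtain ⟨g, hg, hgcard⟩ := Nat.sInf_mem hsetH_dn
    set F : V → ℂ := fun v => planeEquiv.symm (f v) with hF
    set Z : W → ℂ := fun w => planeEquiv.symm (g w) with hZ
    have hFinj : Function.Injective F := planeEquiv.symm.injective.comp hf.1
    have hZinj : Function.Injective Z := planeEquiv.symm.injective.comp hg.1
    have hdF : ∀ v, planeEquiv (F v) = f v := fun v => planeEquiv.apply_symm_apply _
    have hdZ : ∀ w, planeEquiv (Z w) = g w := fun w => planeEquiv.apply_symm_apply _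
    have hdistF : ∀ x y, dist (F x) (F y) = dist (f x) (f y) := fun x y => by
      rw [← planeEquiv.dist_map, hdF, hdF]
    have hdistZ : ∀ x y, dist (Z x) (Z y) = dist (g x) (g y) := fun x y => by
      rw [← planeEquiv.dist_map, hdZ, hdZ]
    have hFd : ∀ a b c, G.Adj a b → F c ∉ openSegment ℝ (F a) (F b) := by
      intro a b c hadj hmem
      have := (planeEquiv_seg (F a) (F b) (F c)).2 hmem
      rw [hdF, hdF, hdF] at this
      exact hf.2 a b c hadj this
    have hZd : ∀ a b c, H.Adj a b → Z c ∉ openSegment ℝ (Z a) (Z b) := by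
      intro a b c hadj hmem
      have := (planeEquiv_seg (Z a) (Z b) (Z c)).2 hmem
      rw [hdZ, hdZ, hdZ] at this
      exact hg.2 a b c hadj this
    set ℓG : ℝ := dist (f a1) (f b1) with hℓG
    set ℓH : ℝ := dist (g a2) (g b2) with hℓH
    have hℓGpos : 0 < ℓG := dist_pos.2 (fun h => hab.ne (hf.1 h))
    have hℓHpos : 0 < ℓH := dist_pos.2 (fun h => hcd.ne (hg.1 h))
    set μ : ℝ := ℓG / ℓH with hμdef
    have hμ : 0 < μ := div_pos hℓGpos hℓHpos
    obtain ⟨u, hu1, huinj, huseg⟩ := exists_unit_drawing G H F Z hFinj hZinj hFd hZd μ hμ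
    set D : V × W → Plane := fun p => planeEquiv (F p.1 + (μ:ℂ) * u * Z p.2) with hD
    have hDinj : Function.Injective D := fun p q h => huinj (planeEquiv.injective h)
    have hDdraw : (G.boxProd H).IsDrawing D := by
      refine ⟨hDinj, ?_⟩
      intro p q r hpq hmem
      refine huseg p q r hpq ((planeEquiv_seg _ _ _).1 ?_)
      exact show planeEquiv (F r.1 + (μ:ℂ) * u * Z r.2) ∈ openSegment ℝ
        (planeEquiv (F p.1 + (μ:ℂ) * u * Z p.2))
        (planeEquiv (F q.1 + (μ:ℂ) * u * Z q.2)) from hmem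
    set L1 : Set ℝ := G.edgeLengths f with hL1
    set L2 : Set ℝ := (fun d => μ * d) '' (H.edgeLengths g) with hL2
    have hL1fin : L1.Finite := edgeLengths_finite G f
    have hL2fin : L2.Finite := (edgeLengths_finite H g).image _
    have hsub : (G.boxProd H).edgeLengths D ⊆ L1 ∪ L2 := by
      rintro d ⟨p, q, hpq, hd⟩
      rcases hpq with ⟨h1, h2⟩ | ⟨h1, h2⟩
      · left
        have hc : dist (D p) (D q) = dist (f p.1) (f q.1) := by
          rw [show D p = planeEquiv (F p.1 + (μ:ℂ) * u * Z p.2) from rfl,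
            show D q = planeEquiv (F q.1 + (μ:ℂ) * u * Z q.2) from rfl,
            planeEquiv.dist_map, dist_eq_norm,
            show (F p.1 + (μ:ℂ) * u * Z p.2) - (F q.1 + (μ:ℂ) * u * Z q.2)
              = F p.1 - F q.1 from by rw [h2]; ring,
            ← dist_eq_norm, hdistF]
        exact ⟨p.1, q.1, h1, by rw [← hd, hc]⟩
      · right
        have hc : dist (D p) (D q) = μ * dist (g p.2) (g q.2) := by
          rw [show D p = planeEquiv (F p.1 + (μ:ℂ) * u * Z p.2) from rfl,
            show D q = planeEquiv (F q.1 + (μ:ℂ) * u * Z q.2) from rfl,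
            planeEquiv.dist_map, dist_eq_norm,
            show (F p.1 + (μ:ℂ) * u * Z p.2) - (F q.1 + (μ:ℂ) * u * Z q.2)
              = ((μ:ℂ) * u) * (Z p.2 - Z q.2) from by rw [h2]; ring,
            norm_mul, norm_mul, hu1, Complex.norm_real, Real.norm_eq_abs, abs_of_pos hμ,
            ← dist_eq_norm, hdistZ]
          ring
        refine ⟨dist (g p.2) (g q.2), ⟨p.2, q.2, h1, rfl⟩, ?_⟩
        show μ * dist (g p.2) (g q.2) = d
        rw [← hd, hc]
    have hmem1 : ℓG ∈ L1 := ⟨a1, b1, hab, rfl⟩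
    have hmem2 : ℓG ∈ L2 := ⟨ℓH, ⟨a2, b2, hcd, rfl⟩, div_mul_cancel₀ ℓG hℓHpos.ne'⟩
    have hUeq : L1 ∪ L2 = L1 ∪ (L2 \ {ℓG}) := by
      ext d
      constructor
      · rintro (h | h)
        · exact Or.inl h
        · by_cases hdd : d = ℓG
          · exact Or.inl (hdd ▸ hmem1)
          · exact Or.inr ⟨h, hdd⟩
      · rintro (h | ⟨h, -⟩)
        · exact Or.inl h
        · exact Or.inr h
    have c1 : (G.boxProd H).dn ≤ ((G.boxProd H).edgeLengths D).ncard :=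
      Nat.sInf_le ⟨D, hDdraw, rfl⟩
    have c2 : ((G.boxProd H).edgeLengths D).ncard ≤ (L1 ∪ L2).ncard :=
      Set.ncard_le_ncard hsub (hL1fin.union hL2fin)
    have c3 : (L1 ∪ (L2 \ {ℓG})).ncard ≤ L1.ncard + (L2 \ {ℓG}).ncard :=
      Set.ncard_union_le _ _
    have c4 : (L2 \ {ℓG}).ncard = L2.ncard - 1 :=
      Set.ncard_diff_singleton_of_mem hmem2
    have c5 : L2.ncard ≤ (H.edgeLengths g).ncard := Set.ncard_image_le (edgeLengths_finite H g)
    have c6 : 1 ≤ L2.ncard := (Set.ncard_pos hL2fin).2 ⟨ℓG, hmem2⟩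
    rw [hUeq] at c2
    have hfc : L1.ncard = G.dn := hfcard
    have hgc : (H.edgeLengths g).ncard = H.dn := hgcard
    omega
  exact ⟨⟨max_le lower_ddn_G lower_ddn_H, upper_ddn⟩,
    ⟨max_le lower_dn_G lower_dn_H, upper_dn⟩⟩
end
end

section
/- For every graph G with at least one edge and every integer d ≥ 1, the d-fold cartesian product G^d = G □ G □ ⋯ □ G (d factors) satisfies ddn(G^d) = ddn(G) and dn(G^d) = dn(G). -/
noncomputable section

/-- The `d`-fold cartesian product `G^d = G □ G □ ⋯ □ G`: vertices are `d`-tuples of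
vertices of `G`; two tuples are adjacent iff they agree in all but one coordinate, in
which they are adjacent in `G`. -/
def SimpleGraph.boxPow {V : Type*} (G : SimpleGraph V) (d : ℕ) :
    SimpleGraph (Fin d → V) where
  Adj f g := ∃ i : Fin d, G.Adj (f i) (g i) ∧ ∀ j : Fin d, j ≠ i → f j = g j
  symm := by
    constructor
    rintro f g ⟨i, hadj, heq⟩
    exact ⟨i, hadj.symm, fun j hj => (heq j hj).symm⟩
  loopless := by
    constructor
    rintro f ⟨i, hadj, -⟩
    exact G.loopless.irrefl _ hadj


/-! ### Auxiliary material -/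

section Aux
open Complex Function

/-- rational parametrization of the unit circle -/
private def circMap (t : ℝ) : ℂ := ⟨(1 - t^2)/(1 + t^2), 2*t/(1 + t^2)⟩

private lemma circMap_norm (t : ℝ) : ‖circMap t‖ = 1 := by
  have h : (1 + t^2) ≠ 0 := by positivity
  have : Complex.normSq (circMap t) = 1 := by
    simp only [Complex.normSq_apply, circMap]
    field_simp
    ring
  rw [Complex.norm_def, this, Real.sqrt_one]

private lemma circMap_inj : Function.Injective circMap := by
  intro t₁ t₂ h
  have h1 : (1 + t₁^2) ≠ 0 := by positivity
  have h2 : (1 + t₂^2) ≠ 0 := by positivity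
  have hre : (1 - t₁^2)/(1 + t₁^2) = (1 - t₂^2)/(1 + t₂^2) := congrArg Complex.re h
  have him : 2*t₁/(1 + t₁^2) = 2*t₂/(1 + t₂^2) := congrArg Complex.im h
  rw [div_eq_div_iff h1 h2] at hre him
  have hsq : t₁^2 = t₂^2 := by nlinarith [hre]
  rw [hsq] at him
  have := mul_right_cancel₀ h2 him
  linarith

/-- the "bad set" of unit complex numbers `z` with `z * c` on the line `a + ℝ b` -/
private def badSet (a b c : ℂ) : Set ℂ := {z | ‖z‖ = 1 ∧ ∃ t : ℝ, z * c = a + t • b}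

private lemma normSq_line (a b : ℂ) (t : ℝ) :
    Complex.normSq (a + t • b) =
      Complex.normSq a + 2*t*(a * (starRingEnd ℂ) b).re + t^2 * Complex.normSq b := by
  simp only [Complex.normSq_apply, Complex.real_smul, Complex.add_re, Complex.add_im,
    Complex.mul_re, Complex.mul_im, Complex.ofReal_re, Complex.ofReal_im,
    Complex.conj_re, Complex.conj_im]
  ring

private lemma line_circle_finite {a b : ℂ} (r : ℝ) (hb : b ≠ 0) :
    {t : ℝ | ‖a + t • b‖ = r}.Finite := by
  by_contra hinf
  have hinf' : Set.Infinite {t : ℝ | ‖a + t • b‖ = r} := hinf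
  obtain ⟨s, hs, hcard⟩ := hinf'.exists_subset_card_eq 3
  rw [Finset.card_eq_three] at hcard
  obtain ⟨t₁, t₂, t₃, h12, h13, h23, rfl⟩ := hcard
  set q := (a * (starRingEnd ℂ) b).re with hq
  set rr := Complex.normSq b with hrr
  have key : ∀ t ∈ ({t₁, t₂, t₃} : Finset ℝ),
      Complex.normSq a + 2*t*q + t^2 * rr = r^2 := by
    intro t ht
    have h : ‖a + t • b‖ = r := hs ht
    rw [← normSq_line]
    rw [show Complex.normSq (a + (t:ℝ) • b) = ‖a + (t:ℝ) • b‖^2 by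
      rw [Complex.sq_norm], h]
  have k1 := key t₁ (by simp)
  have k2 := key t₂ (by simp)
  have k3 := key t₃ (by simp)
  have hrr' : rr ≠ 0 := by simpa [hrr, Complex.normSq_eq_zero] using hb
  have e12 : 2*q + (t₁+t₂)*rr = 0 := by
    have hne : t₁ - t₂ ≠ 0 := sub_ne_zero.mpr h12
    have h0 : (t₁ - t₂) * (2*q + (t₁+t₂)*rr) = 0 := by linear_combination k1 - k2
    rcases mul_eq_zero.mp h0 with h' | h'
    · exact absurd h' hne
    · exact h'
  have e13 : 2*q + (t₁+t₃)*rr = 0 := by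
    have hne : t₁ - t₃ ≠ 0 := sub_ne_zero.mpr h13
    have h0 : (t₁ - t₃) * (2*q + (t₁+t₃)*rr) = 0 := by linear_combination k1 - k3
    rcases mul_eq_zero.mp h0 with h' | h'
    · exact absurd h' hne
    · exact h'
  have : (t₂ - t₃) * rr = 0 := by linear_combination e12 - e13
  rcases mul_eq_zero.mp this with h' | h'
  · exact h23 (by linarith [sub_eq_zero.mp h'])
  · exact hrr' h'

private lemma badSet_finite {a b c : ℂ} (hc : c ≠ 0) : (badSet a b c).Finite := by
  by_cases hb : b = 0
  · apply Set.Finite.subset (Set.finite_singleton (a / c))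
    rintro z ⟨-, t, hz⟩
    simp only [hb, smul_zero, add_zero] at hz
    simp [Set.mem_singleton_iff, eq_div_iff hc, hz]
  · have : badSet a b c ⊆ (fun t : ℝ => (a + t • b) / c) '' {t : ℝ | ‖a + t • b‖ = ‖c‖} := by
      rintro z ⟨hz1, t, hz⟩
      refine ⟨t, ?_, ?_⟩
      · simp only [Set.mem_setOf_eq, ← hz, norm_mul, hz1, one_mul]
      · show (a + t • b) / c = z
        rw [← hz, mul_div_assoc, div_self hc, mul_one]
    exact Set.Finite.subset ((line_circle_finite ‖c‖ hb).image _) this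

private lemma boxPow_succ_adj {V : Type*} (G : SimpleGraph V) {d : ℕ} (x y : Fin (d+1) → V) :
    (G.boxPow (d+1)).Adj x y ↔
      ((G.boxPow d).Adj (Fin.init x) (Fin.init y) ∧ x (Fin.last d) = y (Fin.last d)) ∨
      (Fin.init x = Fin.init y ∧ G.Adj (x (Fin.last d)) (y (Fin.last d))) := by
  constructor
  · rintro ⟨i, hadj, heq⟩
    rcases Fin.eq_castSucc_or_eq_last i with ⟨i', rfl⟩ | rfl
    · left
      refine ⟨⟨i', hadj, fun j hj => heq j.castSucc (by simpa using hj)⟩,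
        heq (Fin.last d) (Fin.castSucc_lt_last i').ne'⟩
    · right
      exact ⟨funext fun j => heq j.castSucc (Fin.castSucc_lt_last j).ne, hadj⟩
  · rintro (⟨⟨i, hadj, heq⟩, hlast⟩ | ⟨hinit, hadj⟩)
    · refine ⟨i.castSucc, hadj, fun j hj => ?_⟩
      rcases Fin.eq_castSucc_or_eq_last j with ⟨j', rfl⟩ | rfl
      · exact heq j' (by simpa using hj)
      · exact hlast
    · refine ⟨Fin.last d, hadj, fun j hj => ?_⟩
      rcases Fin.eq_castSucc_or_eq_last j with ⟨j', rfl⟩ | rfl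
      · exact congrFun hinit j'
      · exact absurd rfl hj

/-- the edge-length set of a map to `ℂ` -/
private def elC {V : Type*} (G : SimpleGraph V) (f : V → ℂ) : Set ℝ :=
  {d : ℝ | ∃ u v : V, G.Adj u v ∧ dist (f u) (f v) = d}

/-- the non-collinearity condition for a map to `ℂ` -/
private def segOK {V : Type*} (G : SimpleGraph V) (f : V → ℂ) : Prop :=
  ∀ u v w : V, G.Adj u v → f w ∉ openSegment ℝ (f u) (f v)

private def cond2 (a b c : ℂ) : Set ℂ := if c = 0 then ∅ else badSet a b c
private def cond3 (a b c : ℂ) : Set ℂ := if c = 0 then ∅ else (starRingEnd ℂ) '' badSet a b c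

private lemma cond2_finite (a b c : ℂ) : (cond2 a b c).Finite := by
  unfold cond2; split
  · exact Set.finite_empty
  · exact badSet_finite (by assumption)

private lemma cond3_finite (a b c : ℂ) : (cond3 a b c).Finite := by
  unfold cond3; split
  · exact Set.finite_empty
  · exact (badSet_finite (by assumption)).image _

private lemma mem_cond2 {a b c : ℂ} (hc : c ≠ 0) {z : ℂ} (h : z ∈ badSet a b c) :
    z ∈ cond2 a b c := by
  unfold cond2; rw [if_neg hc]; exact h

private lemma mem_cond3 {a b c : ℂ} (hc : c ≠ 0) {z : ℂ}
    (h : (starRingEnd ℂ) z ∈ badSet a b c) : z ∈ cond3 a b c := by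
  unfold cond3; rw [if_neg hc]; exact ⟨_, h, Complex.conj_conj z⟩

private lemma step {V : Type*} [Fintype V] (G : SimpleGraph V) [Nonempty V] {d : ℕ}
    (f : V → ℂ) (hf : Injective f) (P : Prop) (hfs : P → segOK G f)
    (g : (Fin d → V) → ℂ) (hg : Injective g) (hgs : P → segOK (G.boxPow d) g) :
    ∃ g' : (Fin (d+1) → V) → ℂ, Injective g' ∧ (P → segOK (G.boxPow (d+1)) g') ∧
      elC (G.boxPow (d+1)) g' = elC (G.boxPow d) g ∪ elC G f := by
  classical
  -- the bad sets
  set B₁ : Set ℂ := Set.range (fun p : ((Fin d → V) × (Fin d → V)) × V × V =>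
    (g p.1.1 - g p.1.2) / (f p.2.1 - f p.2.2)) with hB₁
  set B₂ : Set ℂ := ⋃ p : ((Fin d → V) × (Fin d → V) × (Fin d → V)) × V × V,
    cond2 (g p.1.2.1 - g p.1.2.2) (g p.1.1 - g p.1.2.1) (f p.2.1 - f p.2.2) with hB₂
  set B₃ : Set ℂ := ⋃ p : ((Fin d → V) × (Fin d → V)) × V × V × V,
    cond3 (f p.2.1 - f p.2.2.1) (f p.2.2.1 - f p.2.2.2) (g p.1.1 - g p.1.2) with hB₃
  have hBfin : (B₁ ∪ B₂ ∪ B₃).Finite := by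
    refine ((Set.finite_range _).union ?_).union ?_
    · exact Set.finite_iUnion fun p => cond2_finite _ _ _
    · exact Set.finite_iUnion fun p => cond3_finite _ _ _
  -- choose a good rotation z
  obtain ⟨z, hz1, hzB⟩ : ∃ z : ℂ, ‖z‖ = 1 ∧ z ∉ B₁ ∪ B₂ ∪ B₃ := by
    have hcirc : {z : ℂ | ‖z‖ = 1}.Infinite :=
      Set.infinite_of_injective_forall_mem circMap_inj (fun t => circMap_norm t)
    obtain ⟨z, hz⟩ := (hcirc.diff hBfin).nonempty
    exact ⟨z, hz.1, hz.2⟩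
  have hz0 : z ≠ 0 := by intro h; rw [h] at hz1; simp at hz1
  set g' : (Fin (d+1) → V) → ℂ :=
    fun x => g (Fin.init x) + z * f (x (Fin.last d)) with hg'
  have hnormSq : Complex.normSq z = 1 := by
    rw [← Complex.sq_norm, hz1, one_pow]
  refine ⟨g', ?_, ?_, ?_⟩
  · -- injectivity
    intro x y h
    by_cases hl : x (Fin.last d) = y (Fin.last d)
    · simp only [hg'] at h
      rw [hl] at h
      have hinit := hg (add_right_cancel h)
      funext j
      rcases Fin.eq_castSucc_or_eq_last j with ⟨j', rfl⟩ | rfl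
      · exact congrFun hinit j'
      · exact hl
    · exfalso
      have hfne : f (y (Fin.last d)) - f (x (Fin.last d)) ≠ 0 :=
        sub_ne_zero.mpr fun e => hl (hf e).symm
      apply hzB
      left; left
      refine ⟨((Fin.init x, Fin.init y), (y (Fin.last d), x (Fin.last d))), ?_⟩
      simp only
      rw [div_eq_iff hfne]
      simp only [hg'] at h
      linear_combination h
  · -- segment condition
    intro hP x y w' hadj hmem
    rw [boxPow_succ_adj] at hadj
    simp only [openSegment, Set.mem_setOf_eq] at hmem
    obtain ⟨a, b, ha, hb, hab, heq⟩ := hmem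
    have hbval : b = 1 - a := by linarith
    subst hbval
    simp only [hg'] at heq
    rcases hadj with ⟨hadj', hlast⟩ | ⟨hinit, hadjG⟩
    · rw [hlast] at heq
      by_cases hw : w' (Fin.last d) = y (Fin.last d)
      · rw [hw] at heq
        apply hgs hP (Fin.init x) (Fin.init y) (Fin.init w') hadj'
        refine ⟨a, 1-a, ha, hb, by ring, ?_⟩
        simp only [Complex.real_smul] at heq ⊢
        push_cast at heq ⊢
        linear_combination heq
      · apply hzB
        left; right
        rw [hB₂]
        refine Set.mem_iUnion.mpr ⟨((Fin.init x, Fin.init y, Fin.init w'),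
          (w' (Fin.last d), y (Fin.last d))), ?_⟩
        have hc : f (w' (Fin.last d)) - f (y (Fin.last d)) ≠ 0 :=
          sub_ne_zero.mpr fun e => hw (hf e)
        refine mem_cond2 hc ⟨hz1, a, ?_⟩
        simp only [Complex.real_smul] at heq ⊢
        push_cast at heq ⊢
        linear_combination -heq
    · rw [← hinit] at heq
      by_cases hw : Fin.init w' = Fin.init x
      · rw [hw] at heq
        apply hfs hP (x (Fin.last d)) (y (Fin.last d)) (w' (Fin.last d)) hadjG
        refine ⟨a, 1-a, ha, hb, by ring, ?_⟩
        have hkey : z * ((a:ℂ) * f (x (Fin.last d)) + (1-(a:ℂ)) * f (y (Fin.last d))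
            - f (w' (Fin.last d))) = 0 := by
          simp only [Complex.real_smul] at heq
          push_cast at heq
          linear_combination heq
        have h0 := (mul_eq_zero.mp hkey).resolve_left hz0
        simp only [Complex.real_smul]
        push_cast
        linear_combination h0
      · apply hzB
        right
        rw [hB₃]
        refine Set.mem_iUnion.mpr ⟨((Fin.init x, Fin.init w'),
          (w' (Fin.last d), y (Fin.last d), x (Fin.last d))), ?_⟩
        have hc : g (Fin.init x) - g (Fin.init w') ≠ 0 :=
          sub_ne_zero.mpr fun e => hw (hg e).symm
        have hkey : z * ((f (w' (Fin.last d)) - f (y (Fin.last d)))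
            + (a:ℝ) • (f (y (Fin.last d)) - f (x (Fin.last d))))
            = g (Fin.init x) - g (Fin.init w') := by
          simp only [Complex.real_smul] at heq ⊢
          push_cast at heq ⊢
          linear_combination -heq
        refine mem_cond3 hc ⟨by simpa using hz1, a, ?_⟩
        rw [← hkey, ← mul_assoc, mul_comm ((starRingEnd ℂ) z) z, Complex.mul_conj, hnormSq]
        simp
  · -- edge lengths
    ext r
    constructor
    · rintro ⟨x, y, hadj, rfl⟩
      rw [boxPow_succ_adj] at hadj
      rcases hadj with ⟨hadj', hlast⟩ | ⟨hinit, hadjG⟩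
      · left
        refine ⟨Fin.init x, Fin.init y, hadj', ?_⟩
        simp only [hg', dist_eq_norm]
        rw [hlast]
        ring_nf
      · right
        refine ⟨x (Fin.last d), y (Fin.last d), hadjG, ?_⟩
        simp only [hg', dist_eq_norm, hinit]
        rw [show g (Fin.init y) + z * f (x (Fin.last d)) -
          (g (Fin.init y) + z * f (y (Fin.last d)))
          = z * (f (x (Fin.last d)) - f (y (Fin.last d))) by ring]
        rw [norm_mul, hz1, one_mul]
    · rintro (⟨x, y, hadj, rfl⟩ | ⟨u, v, hadj, rfl⟩)
      · obtain ⟨v₀⟩ := ‹Nonempty V›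
        refine ⟨Fin.snoc x v₀, Fin.snoc y v₀, ?_, ?_⟩
        · rw [boxPow_succ_adj]
          left
          rw [Fin.init_snoc, Fin.init_snoc, Fin.snoc_last, Fin.snoc_last]
          exact ⟨hadj, rfl⟩
        · simp only [hg', Fin.init_snoc, Fin.snoc_last, dist_eq_norm]
          ring_nf
      · obtain ⟨x₀⟩ : Nonempty (Fin d → V) := inferInstance
        refine ⟨Fin.snoc x₀ u, Fin.snoc x₀ v, ?_, ?_⟩
        · rw [boxPow_succ_adj]
          right
          rw [Fin.init_snoc, Fin.init_snoc, Fin.snoc_last, Fin.snoc_last]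
          exact ⟨rfl, hadj⟩
        · simp only [hg', Fin.init_snoc, Fin.snoc_last, dist_eq_norm]
          rw [show g x₀ + z * f u - (g x₀ + z * f v) = z * (f u - f v) by ring]
          rw [norm_mul, hz1, one_mul]


private lemma boxPow_one_adj {V : Type*} (G : SimpleGraph V) (x y : Fin 1 → V) :
    (G.boxPow 1).Adj x y ↔ G.Adj (x 0) (y 0) := by
  constructor
  · rintro ⟨i, h, -⟩; rwa [Subsingleton.elim (0 : Fin 1) i]
  · intro h; exact ⟨0, h, fun j hj => absurd (Subsingleton.elim j 0) hj⟩

private lemma main_exists {V : Type*} [Fintype V] [Nonempty V] (G : SimpleGraph V)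
    (f : V → ℂ) (hf : Injective f) (P : Prop) (hfs : P → segOK G f) :
    ∀ d : ℕ, 1 ≤ d → ∃ g : (Fin d → V) → ℂ, Injective g ∧ (P → segOK (G.boxPow d) g) ∧
      elC (G.boxPow d) g = elC G f := by
  intro d
  induction d with
  | zero => omega
  | succ n ih =>
    intro _h
    rcases Nat.eq_zero_or_pos n with rfl | hn
    · refine ⟨fun x => f (x 0), ?_, ?_, ?_⟩
      · intro x y h
        funext j
        have hj : j = 0 := Fin.ext (by omega)
        rw [hj]
        exact hf h
      · intro hP x y w hadj hm
        rw [boxPow_one_adj] at hadj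
        exact hfs hP (x 0) (y 0) (w 0) hadj hm
      · ext r
        constructor
        · rintro ⟨x, y, h, rfl⟩
          exact ⟨x 0, y 0, (boxPow_one_adj G x y).mp h, rfl⟩
        · rintro ⟨u, v, h, rfl⟩
          exact ⟨fun _ => u, fun _ => v, (boxPow_one_adj G _ _).mpr h, rfl⟩
    · obtain ⟨g, hg, hgs, hlen⟩ := ih hn
      obtain ⟨g', hg', hgs', hlen'⟩ := step G f hf P hfs g hg hgs
      exact ⟨g', hg', hgs', by rw [hlen', hlen, Set.union_self]⟩

/-- the standard linear isometry between `ℂ` and the Euclidean plane -/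
private def eC : ℂ ≃ₗᵢ[ℝ] Plane := Complex.orthonormalBasisOneI.repr

private lemma el_transfer {V : Type*} (G : SimpleGraph V) (f : V → ℂ) :
    G.edgeLengths (fun v => eC (f v)) = elC G f := by
  ext r
  simp only [SimpleGraph.edgeLengths, elC, Set.mem_setOf_eq, eC.dist_map]

private lemma seg_transfer (a b x : ℂ) :
    eC x ∈ openSegment ℝ (eC a) (eC b) ↔ x ∈ openSegment ℝ a b := by
  simp only [openSegment, Set.mem_setOf_eq]
  constructor
  · rintro ⟨s, t, hs, ht, hst, h⟩
    rw [← map_smul, ← map_smul, ← map_add] at h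
    exact ⟨s, t, hs, ht, hst, eC.injective h⟩
  · rintro ⟨s, t, hs, ht, hst, h⟩
    exact ⟨s, t, hs, ht, hst, by rw [← h, map_add, map_smul, map_smul]⟩

private lemma exists_drawingC {W : Type*} [Fintype W] (H : SimpleGraph W) :
    ∃ f : W → ℂ, Injective f ∧ segOK H f := by
  set f : W → ℂ := fun w => circMap ((Fintype.equivFin W w : ℕ) : ℝ) with hfdef
  have hinj : Injective f := by
    intro u v h
    have h' : ((Fintype.equivFin W u : ℕ) : ℝ) = ((Fintype.equivFin W v : ℕ) : ℝ) :=
      circMap_inj h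
    exact (Fintype.equivFin W).injective (Fin.val_injective (Nat.cast_injective h'))
  refine ⟨f, hinj, ?_⟩
  intro u v w hadj hm
  obtain ⟨a, b, ha, hb, hab, heq⟩ := hm
  have hne : f u ≠ f v := fun h => hadj.ne (hinj h)
  have hlt : ‖a • f u + b • f v‖ < 1 :=
    norm_combo_lt_of_ne (le_of_eq (circMap_norm _)) (le_of_eq (circMap_norm _)) hne ha hb hab
  rw [heq] at hlt
  rw [show ‖f w‖ = 1 from circMap_norm _] at hlt
  exact lt_irrefl _ hlt

private lemma exists_drawingP {W : Type*} [Fintype W] (H : SimpleGraph W) :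
    ∃ f : W → Plane, H.IsDrawing f := by
  obtain ⟨f, hinj, hseg⟩ := exists_drawingC H
  refine ⟨fun w => eC (f w), eC.injective.comp hinj, ?_⟩
  intro u v w hadj hm
  exact hseg u v w hadj ((seg_transfer _ _ _).mp hm)

private lemma el_fin {W : Type*} [Fintype W] (H : SimpleGraph W) (f : W → Plane) :
    (H.edgeLengths f).Finite := by
  have hsub : H.edgeLengths f ⊆ (fun p : W × W => dist (f p.1) (f p.2)) '' Set.univ := by
    rintro r ⟨u, v, h, hr⟩
    exact ⟨(u, v), trivial, hr⟩
  exact (Set.finite_univ.image _).subset hsub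

private lemma iota_spec {V : Type*} (G : SimpleGraph V) {d : ℕ} (hd : 1 ≤ d) (u₀ : V) :
    ∃ ι : V → (Fin d → V), Injective ι ∧
      ∀ u v, G.Adj u v → (G.boxPow d).Adj (ι u) (ι v) := by
  classical
  set i₀ : Fin d := ⟨0, hd⟩ with hi₀
  refine ⟨fun v i => if i = i₀ then v else u₀, ?_, ?_⟩
  · intro u v h
    have := congrFun h i₀
    simpa using this
  · intro u v h
    refine ⟨i₀, by simpa using h, fun j hj => by simp [if_neg hj]⟩

end Aux

/-- For every graph `G` with at least one edge and every `d ≥ 1`,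
`ddn (G^d) = ddn G` and `dn (G^d) = dn G`. -/
theorem stmt19 {V : Type*} [Fintype V] (G : SimpleGraph V)
    (hG : G.edgeSet.Nonempty) (d : ℕ) (hd : 1 ≤ d) :
    (G.boxPow d).ddn = G.ddn ∧ (G.boxPow d).dn = G.dn := by
  classical
  obtain ⟨u₀, v₀, h₀⟩ : ∃ u v, G.Adj u v := by
    obtain ⟨e, he⟩ := hG
    induction e using Sym2.ind with
    | _ u v => exact ⟨u, v, he⟩
  have hne : Nonempty V := ⟨u₀⟩
  obtain ⟨ι, hιinj, hιadj⟩ := iota_spec G hd u₀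
  constructor
  · -- degenerate distance-number
    apply le_antisymm
    · have hSne : {k : ℕ | ∃ f : V → Plane,
          G.IsDegenDrawing f ∧ (G.edgeLengths f).ncard = k}.Nonempty := by
        obtain ⟨f, hf⟩ := exists_drawingP G
        exact ⟨_, f, hf.1, rfl⟩
      obtain ⟨f₀, hf₀, hcard⟩ := Nat.sInf_mem hSne
      obtain ⟨g, hg, -, hlen⟩ := main_exists G (fun v => eC.symm (f₀ v))
        (eC.symm.injective.comp hf₀) False (fun h => h.elim) d hd
      apply Nat.sInf_le
      refine ⟨fun x => eC (g x), eC.injective.comp hg, ?_⟩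
      rw [el_transfer, hlen]
      have htr : elC G (fun v => eC.symm (f₀ v)) = G.edgeLengths f₀ := by
        rw [← el_transfer]
        exact congrArg _ (funext fun v => by simp)
      rw [htr]
      exact hcard
    · have hSne' : {k : ℕ | ∃ f : (Fin d → V) → Plane,
          (G.boxPow d).IsDegenDrawing f ∧ ((G.boxPow d).edgeLengths f).ncard = k}.Nonempty := by
        obtain ⟨f, hf⟩ := exists_drawingP (G.boxPow d)
        exact ⟨_, f, hf.1, rfl⟩
      obtain ⟨g₁, hg₁, hcard₁⟩ := Nat.sInf_mem hSne'
      have hsub : G.edgeLengths (fun v => g₁ (ι v)) ⊆ (G.boxPow d).edgeLengths g₁ := by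
        rintro r ⟨u, v, h, hr⟩
        exact ⟨ι u, ι v, hιadj u v h, hr⟩
      calc G.ddn ≤ (G.edgeLengths (fun v => g₁ (ι v))).ncard :=
            Nat.sInf_le ⟨_, hg₁.comp hιinj, rfl⟩
        _ ≤ ((G.boxPow d).edgeLengths g₁).ncard := Set.ncard_le_ncard hsub (el_fin _ _)
        _ = (G.boxPow d).ddn := hcard₁
  · -- distance-number
    apply le_antisymm
    · have hSne : {k : ℕ | ∃ f : V → Plane,
          G.IsDrawing f ∧ (G.edgeLengths f).ncard = k}.Nonempty := by
        obtain ⟨f, hf⟩ := exists_drawingP G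
        exact ⟨_, f, hf, rfl⟩
      obtain ⟨f₀, hf₀, hcard⟩ := Nat.sInf_mem hSne
      have hsegC : segOK G (fun v => eC.symm (f₀ v)) := by
        intro u v w hadj hm
        apply hf₀.2 u v w hadj
        have := (seg_transfer _ _ _).mpr hm
        simpa using this
      obtain ⟨g, hg, hgs, hlen⟩ := main_exists G (fun v => eC.symm (f₀ v))
        (eC.symm.injective.comp hf₀.1) True (fun _ => hsegC) d hd
      apply Nat.sInf_le
      refine ⟨fun x => eC (g x), ⟨eC.injective.comp hg, ?_⟩, ?_⟩
      · intro u v w hadj hm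
        exact hgs trivial u v w hadj ((seg_transfer _ _ _).mp hm)
      · rw [el_transfer, hlen]
        have htr : elC G (fun v => eC.symm (f₀ v)) = G.edgeLengths f₀ := by
          rw [← el_transfer]
          exact congrArg _ (funext fun v => by simp)
        rw [htr]
        exact hcard
    · have hSne' : {k : ℕ | ∃ f : (Fin d → V) → Plane,
          (G.boxPow d).IsDrawing f ∧ ((G.boxPow d).edgeLengths f).ncard = k}.Nonempty := by
        obtain ⟨f, hf⟩ := exists_drawingP (G.boxPow d)
        exact ⟨_, f, hf, rfl⟩
      obtain ⟨g₁, hg₁, hcard₁⟩ := Nat.sInf_mem hSne'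
      have hsub : G.edgeLengths (fun v => g₁ (ι v)) ⊆ (G.boxPow d).edgeLengths g₁ := by
        rintro r ⟨u, v, h, hr⟩
        exact ⟨ι u, ι v, hιadj u v h, hr⟩
      have hdraw : G.IsDrawing (fun v => g₁ (ι v)) := by
        refine ⟨hg₁.1.comp hιinj, ?_⟩
        intro u v w hadj hm
        exact hg₁.2 (ι u) (ι v) (ι w) (hιadj u v hadj) hm
      calc G.dn ≤ (G.edgeLengths (fun v => g₁ (ι v))).ncard :=
            Nat.sInf_le ⟨_, hdraw, rfl⟩
        _ ≤ ((G.boxPow d).edgeLengths g₁).ncard := Set.ncard_le_ncard hsub (el_fin _ _)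
        _ = (G.boxPow d).dn := hcard₁
end
end
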